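/- arXiv:2204.02503 — 3 statements merged into one kernel-verified Lean document; each statement's English description precedes it below -/
import Mathlib

section
/- Let k ≥ 2 and let S be a non-trivial simplicial k-circuit with graph G = G(S). Then: (a) G is (k+1)-connected; and (b) if X is a set of k+1 vertices whose removal disconnects G, then X induces a clique in G, X is not a simplex of S, and there exist simplicial k-circuits S′ and S″ such that S′ ∩ S″ = {X} and S = S′ △ S″, where △ denotes symmetric difference. -/
/-! ### Simplicial multicomplexes over the vertex type ℕ -/

/-- The vertex set of a simplicial multicomplex: the union of its simplices. -/
def vertexSet (S : Multiset (Finset ℕ)) : Finset ℕ := S.toFinset.sup id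

lemma mem_vertexSet_of_mem {S : Multiset (Finset ℕ)} {U : Finset ℕ} {x : ℕ}
    (hU : U ∈ S) (hx : x ∈ U) : x ∈ vertexSet S :=
  Finset.mem_of_subset (Finset.le_sup (f := id) (Multiset.mem_toFinset.2 hU)) hx

/-- The number of simplices of `S` containing `F`, counted with multiplicity. -/
def simplexCount (S : Multiset (Finset ℕ)) (F : Finset ℕ) : ℕ :=
  Multiset.countP (fun U => F ⊆ U) S

/-- `S` is a simplicial `k`-multicomplex: all its members are `(k+1)`-element sets. -/
def IsMultiComplex (k : ℕ) (S : Multiset (Finset ℕ)) : Prop :=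
  ∀ U ∈ S, U.card = k + 1

/-- The boundary of `S`: all `k`-element sets lying in an odd number of simplices of `S`,
counted with multiplicity. -/
def boundarySet (k : ℕ) (S : Multiset (Finset ℕ)) : Set (Finset ℕ) :=
  {F | F.card = k ∧ Odd (simplexCount S F)}

/-- A simplicial `k`-cycle: a simplicial `k`-multicomplex with empty boundary. -/
def IsSimpCycle (k : ℕ) (S : Multiset (Finset ℕ)) : Prop :=
  IsMultiComplex k S ∧ ∀ F : Finset ℕ, F.card = k → Even (simplexCount S F)

/-- A simplicial `k`-circuit: a nonempty simplicial `k`-cycle, no proper nonempty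
sub-multiset of which is a simplicial `k`-cycle. -/
def IsSimpCircuit (k : ℕ) (S : Multiset (Finset ℕ)) : Prop :=
  IsSimpCycle k S ∧ S ≠ 0 ∧
    ∀ T : Multiset (Finset ℕ), T ≤ S → T ≠ 0 → T ≠ S → ¬ IsSimpCycle k T

/-- A trivial simplicial circuit consists of two copies of a single simplex. -/
def IsTrivialSimpCircuit (S : Multiset (Finset ℕ)) : Prop :=
  ∃ U : Finset ℕ, S = {U, U}

/-- Symmetric difference of multisets (for multisets with no repeated members this is the
usual symmetric difference of sets). -/
def symmDiffM (S T : Multiset (Finset ℕ)) : Multiset (Finset ℕ) := (S - T) + (T - S)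

/-- Contraction of the vertex `v` onto the vertex `u`: delete every simplex containing both
`u` and `v`, and replace every simplex `U` containing `v` but not `u` by `(U∖{v})∪{u}`. -/
def contractS (S : Multiset (Finset ℕ)) (u v : ℕ) : Multiset (Finset ℕ) :=
  (S.filter fun U => ¬ (u ∈ U ∧ v ∈ U)).map fun U =>
    if v ∈ U then insert u (U.erase v) else U

/-- The link of an edge `uv` of `S`. -/
def linkS (S : Multiset (Finset ℕ)) (u v : ℕ) : Multiset (Finset ℕ) :=
  (S.filter fun U => u ∈ U ∧ v ∈ U).map fun U => U \ {u, v}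

/-- `S` is strongly connected: any two simplices are joined by a sequence of simplices of `S`
in which consecutive simplices share at least `k` vertices. -/
def StronglyConnectedS (k : ℕ) (S : Multiset (Finset ℕ)) : Prop :=
  ∀ U ∈ S, ∀ W ∈ S,
    Relation.ReflTransGen (fun A B => A ∈ S ∧ B ∈ S ∧ k ≤ (A ∩ B).card) U W

/-- A `k`-pseudomanifold: a nonempty strongly connected simplicial `k`-complex in which every
`k`-element subset of a simplex is contained in exactly two simplices. -/
def IsPseudomanifold (k : ℕ) (S : Multiset (Finset ℕ)) : Prop :=
  S.Nodup ∧ IsMultiComplex k S ∧ S ≠ 0 ∧ StronglyConnectedS k S ∧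
    ∀ F : Finset ℕ, F.card = k → (∃ U ∈ S, F ⊆ U) → simplexCount S F = 2

/-- Stacked `k`-spheres: obtained from the boundary of a `(k+1)`-simplex by repeated
barycentric subdivisions of facets. -/
inductive IsStackedSphere : ℕ → Multiset (Finset ℕ) → Prop
  | base (k : ℕ) (W : Finset ℕ) (hW : W.card = k + 2) :
      IsStackedSphere k (W.powersetCard (k + 1)).val
  | subdiv (k : ℕ) (S : Multiset (Finset ℕ)) (U : Finset ℕ) (w : ℕ)
      (hS : IsStackedSphere k S) (hU : U ∈ S) (hw : w ∉ vertexSet S) :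
      IsStackedSphere k (symmDiffM S ((insert w U).powersetCard (k + 1)).val)

/-- `S` is a copy of the simplicial `k`-circuit `ℒ_k`. -/
def IsCopyOfL (k : ℕ) (S : Multiset (Finset ℕ)) : Prop :=
  ∃ (U : Finset ℕ) (x y : ℕ), U.card = k + 1 ∧ x ∉ U ∧ y ∉ U ∧ x ≠ y ∧
    vertexSet S = U ∪ {x, y} ∧
    S = ((U.image fun w => insert x (U.erase w)) ∪ (U.image fun w => insert y (U.erase w))).val

open scoped Classical in
/-- The family `S†`: all `(k+1)`-element subsets `K` of `V(S)` containing `u` and `v` such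
that both `K∖{u}` and `K∖{v}` are contained in some simplex of `S`. -/
noncomputable def faceDag (k : ℕ) (S : Multiset (Finset ℕ)) (u v : ℕ) : Multiset (Finset ℕ) :=
  ((vertexSet S).powersetCard (k + 1)).val.filter fun K =>
    u ∈ K ∧ v ∈ K ∧ (∃ U ∈ S, K.erase u ⊆ U) ∧ (∃ U ∈ S, K.erase v ⊆ U)

open scoped Classical in
/-- The family `S*`: the members `K` of `S†` with `K∖{u}` and `K∖{v}` in the boundary of `S`. -/
noncomputable def faceStar (k : ℕ) (S : Multiset (Finset ℕ)) (u v : ℕ) : Multiset (Finset ℕ) :=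
  (faceDag k S u v).filter fun K =>
    K.erase u ∈ boundarySet k S ∧ K.erase v ∈ boundarySet k S

/-! ### Finite graphs with vertices in ℕ -/

/-- A finite simple graph with vertex set a finite subset of `ℕ`. -/
structure FinGraph : Type where
  verts : Finset ℕ
  Adj : ℕ → ℕ → Prop
  symm : ∀ ⦃x y⦄, Adj x y → Adj y x
  loopless : ∀ x, ¬ Adj x x
  adj_mem : ∀ ⦃x y⦄, Adj x y → x ∈ verts ∧ y ∈ verts

namespace FinGraph

/-- The number of edges of `G`. -/
noncomputable def edgeCount (G : FinGraph) : ℕ := (Sym2.fromRel (r := G.Adj) ⟨fun _ _ h => G.symm h⟩).ncard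

/-- `G` is connected. -/
def Connected (G : FinGraph) : Prop :=
  G.verts.Nonempty ∧ ∀ x ∈ G.verts, ∀ y ∈ G.verts, Relation.ReflTransGen G.Adj x y

/-- Deletion of a set of vertices. -/
def deleteVerts (G : FinGraph) (K : Finset ℕ) : FinGraph where
  verts := G.verts \ K
  Adj x y := G.Adj x y ∧ x ∉ K ∧ y ∉ K
  symm := by
    rintro x y ⟨h, hx, hy⟩
    exact ⟨G.symm h, hy, hx⟩
  loopless := by
    rintro x ⟨h, -, -⟩
    exact G.loopless x h
  adj_mem := by
    rintro x y ⟨h, hx, hy⟩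
    exact ⟨Finset.mem_sdiff.2 ⟨(G.adj_mem h).1, hx⟩, Finset.mem_sdiff.2 ⟨(G.adj_mem h).2, hy⟩⟩

/-- `G` is `m`-connected: it has at least `m+1` vertices and deleting any set of fewer than
`m` vertices leaves a connected graph. -/
def ConnectedGE (m : ℕ) (G : FinGraph) : Prop :=
  m + 1 ≤ G.verts.card ∧ ∀ K : Finset ℕ, K.card < m → (G.deleteVerts K).Connected

/-- `G` is a complete graph on `n` vertices. -/
def IsCompleteOn (G : FinGraph) (n : ℕ) : Prop :=
  G.verts.card = n ∧ ∀ x ∈ G.verts, ∀ y ∈ G.verts, x ≠ y → G.Adj x y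

/-- `H` is a subgraph of `G`. -/
def IsSubgraph (H G : FinGraph) : Prop :=
  H.verts ⊆ G.verts ∧ ∀ ⦃x y⦄, H.Adj x y → G.Adj x y

/-- `X` is a clique of `G`. -/
def IsClique (G : FinGraph) (X : Finset ℕ) : Prop :=
  X ⊆ G.verts ∧ ∀ x ∈ X, ∀ y ∈ X, x ≠ y → G.Adj x y

/-- The union of two graphs. -/
def union (G H : FinGraph) : FinGraph where
  verts := G.verts ∪ H.verts
  Adj x y := G.Adj x y ∨ H.Adj x y
  symm := by
    rintro x y (h | h)
    exacts [Or.inl (G.symm h), Or.inr (H.symm h)]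
  loopless := by
    rintro x (h | h)
    exacts [G.loopless x h, H.loopless x h]
  adj_mem := by
    rintro x y (h | h)
    · exact ⟨Finset.mem_union_left _ (G.adj_mem h).1, Finset.mem_union_left _ (G.adj_mem h).2⟩
    · exact ⟨Finset.mem_union_right _ (H.adj_mem h).1, Finset.mem_union_right _ (H.adj_mem h).2⟩

/-- Adding the edge `uv` to `G` (for vertices `u ≠ v` of `G`). -/
def addEdge (G : FinGraph) (u v : ℕ) : FinGraph where
  verts := G.verts
  Adj x y := G.Adj x y ∨
    (x ≠ y ∧ x ∈ G.verts ∧ y ∈ G.verts ∧ ((x = u ∧ y = v) ∨ (x = v ∧ y = u)))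
  symm := by
    rintro x y (h | ⟨hxy, hx, hy, h | h⟩)
    · exact Or.inl (G.symm h)
    · exact Or.inr ⟨hxy.symm, hy, hx, Or.inr ⟨h.2, h.1⟩⟩
    · exact Or.inr ⟨hxy.symm, hy, hx, Or.inl ⟨h.2, h.1⟩⟩
  loopless := by
    rintro x (h | ⟨hxx, -⟩)
    · exact G.loopless x h
    · exact hxx rfl
  adj_mem := by
    rintro x y (h | ⟨-, hx, hy, -⟩)
    · exact G.adj_mem h
    · exact ⟨hx, hy⟩

/-- Adding a set `B` of unordered pairs of vertices to `G` as edges. -/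
def addEdges (G : FinGraph) (B : Finset (Sym2 ℕ)) : FinGraph where
  verts := G.verts
  Adj x y := G.Adj x y ∨ (x ≠ y ∧ x ∈ G.verts ∧ y ∈ G.verts ∧ s(x, y) ∈ B)
  symm := by
    rintro x y (h | ⟨hxy, hx, hy, hB⟩)
    · exact Or.inl (G.symm h)
    · exact Or.inr ⟨hxy.symm, hy, hx, by rwa [Sym2.eq_swap]⟩
  loopless := by
    rintro x (h | ⟨hxx, -⟩)
    · exact G.loopless x h
    · exact hxx rfl
  adj_mem := by
    rintro x y (h | ⟨-, hx, hy, -⟩)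
    · exact G.adj_mem h
    · exact ⟨hx, hy⟩

/-- Deleting the edge `uv` from `G`. -/
def deleteEdge (G : FinGraph) (u v : ℕ) : FinGraph where
  verts := G.verts
  Adj x y := G.Adj x y ∧ ¬ ((x = u ∧ y = v) ∨ (x = v ∧ y = u))
  symm := by
    rintro x y ⟨h, hne⟩
    refine ⟨G.symm h, fun hc => hne ?_⟩
    rcases hc with ⟨h1, h2⟩ | ⟨h1, h2⟩
    · exact Or.inr ⟨h2, h1⟩
    · exact Or.inl ⟨h2, h1⟩
  loopless := by
    rintro x ⟨h, -⟩
    exact G.loopless x h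
  adj_mem := by
    rintro x y ⟨h, -⟩
    exact G.adj_mem h

/-- The contraction `G/uv`: delete `v` and join `u` to every former neighbour of `v`
other than `u`. -/
def contract (G : FinGraph) (u v : ℕ) : FinGraph where
  verts := G.verts.erase v
  Adj x y := x ≠ y ∧ x ∈ G.verts ∧ y ∈ G.verts ∧ x ≠ v ∧ y ≠ v ∧
    (G.Adj x y ∨ (x = u ∧ G.Adj v y) ∨ (y = u ∧ G.Adj v x))
  symm := by
    rintro x y ⟨hxy, hx, hy, hxv, hyv, h⟩
    refine ⟨hxy.symm, hy, hx, hyv, hxv, ?_⟩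
    rcases h with h | h | h
    · exact Or.inl (G.symm h)
    · exact Or.inr (Or.inr h)
    · exact Or.inr (Or.inl h)
  loopless := by
    rintro x ⟨hxx, -⟩
    exact hxx rfl
  adj_mem := by
    rintro x y ⟨hxy, hx, hy, hxv, hyv, -⟩
    exact ⟨Finset.mem_erase.2 ⟨hxv, hx⟩, Finset.mem_erase.2 ⟨hyv, hy⟩⟩

/-! ### Rigidity notions -/

/-- A realisation of `G` in `ℝ^d` is generic if the coordinates of the positions of the
vertices of `G` are algebraically independent over `ℚ`. -/
def IsGeneric (d : ℕ) (G : FinGraph) (p : ℕ → EuclideanSpace ℝ (Fin d)) : Prop :=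
  AlgebraicIndependent ℚ fun vi : {x // x ∈ G.verts} × Fin d => p vi.1.1 vi.2

/-- `q` is an infinitesimal motion of `(G, p)`. -/
def IsInfMotion (d : ℕ) (G : FinGraph) (p q : ℕ → EuclideanSpace ℝ (Fin d)) : Prop :=
  ∀ ⦃x y⦄, G.Adj x y → inner ℝ (q x - q y) (p x - p y) = (0 : ℝ)

/-- `q` is a trivial motion of `(G, p)`: it agrees on the vertices of `G` with a map of the
form `v ↦ A (p v) + b` with `A` skew-symmetric. -/
def IsTrivialMotion (d : ℕ) (G : FinGraph) (p q : ℕ → EuclideanSpace ℝ (Fin d)) : Prop :=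
  ∃ (A : EuclideanSpace ℝ (Fin d) →ₗ[ℝ] EuclideanSpace ℝ (Fin d))
    (b : EuclideanSpace ℝ (Fin d)),
      (∀ x y : EuclideanSpace ℝ (Fin d), (inner ℝ (A x) y : ℝ) = -(inner ℝ x (A y) : ℝ)) ∧
        ∀ v ∈ G.verts, q v = A (p v) + b

/-- `(G, p)` is infinitesimally rigid. -/
def IsInfRigid (d : ℕ) (G : FinGraph) (p : ℕ → EuclideanSpace ℝ (Fin d)) : Prop :=
  ∀ q : ℕ → EuclideanSpace ℝ (Fin d), IsInfMotion d G p q → IsTrivialMotion d G p q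

/-- `G` is rigid in `ℝ^d`: every generic realisation is infinitesimally rigid. -/
def IsRigid (d : ℕ) (G : FinGraph) : Prop :=
  ∀ p : ℕ → EuclideanSpace ℝ (Fin d), G.IsGeneric d p → G.IsInfRigid d p

/-- Two realisations are equivalent if corresponding edges have equal lengths. -/
def Equivalent (d : ℕ) (G : FinGraph) (p q : ℕ → EuclideanSpace ℝ (Fin d)) : Prop :=
  ∀ ⦃x y⦄, G.Adj x y → ‖p x - p y‖ = ‖q x - q y‖

/-- Two realisations are congruent if all pairs of vertices are at equal distances. -/
def Congruent (d : ℕ) (G : FinGraph) (p q : ℕ → EuclideanSpace ℝ (Fin d)) : Prop :=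
  ∀ x ∈ G.verts, ∀ y ∈ G.verts, ‖p x - p y‖ = ‖q x - q y‖

/-- `G` is globally rigid in `ℝ^d`. -/
def IsGloballyRigid (d : ℕ) (G : FinGraph) : Prop :=
  ∀ p q : ℕ → EuclideanSpace ℝ (Fin d),
    G.IsGeneric d p → G.Equivalent d p q → G.Congruent d p q

/-- `G` is `uv`-coincident rigid in `ℝ^d`: some realisation with `p u = p v` is
infinitesimally rigid. -/
def IsCoincidentRigid (d : ℕ) (G : FinGraph) (u v : ℕ) : Prop :=
  ∃ p : ℕ → EuclideanSpace ℝ (Fin d), p u = p v ∧ G.IsInfRigid d p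

end FinGraph

/-- The graph `G(S)` of a simplicial multicomplex `S`. -/
def graphOf (S : Multiset (Finset ℕ)) : FinGraph where
  verts := vertexSet S
  Adj x y := x ≠ y ∧ ∃ U ∈ S, x ∈ U ∧ y ∈ U
  symm := by
    rintro x y ⟨hxy, U, hU, hx, hy⟩
    exact ⟨hxy.symm, U, hU, hy, hx⟩
  loopless := by
    rintro x ⟨hxx, -⟩
    exact hxx rfl
  adj_mem := by
    rintro x y ⟨hxy, U, hU, hx, hy⟩
    exact ⟨mem_vertexSet_of_mem hU hx, mem_vertexSet_of_mem hU hy⟩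

/-! ### Cleavage properties -/

/-- The `d`-cleavage property: `G` is `d`-connected and every `d`-element vertex set whose
removal disconnects `G` induces a clique of `G`. -/
def HasCleavage (d : ℕ) (G : FinGraph) : Prop :=
  G.ConnectedGE d ∧ ∀ X : Finset ℕ, X ⊆ G.verts → X.card = d →
    ¬ (G.deleteVerts X).Connected → G.IsClique X

/-- A `(d+1)`-block of `G`: a subgraph that is a complete graph on `d+1` vertices or is
`(d+1)`-connected, and is maximal among subgraphs of `G` with this property. -/
def IsBlock (d : ℕ) (G D : FinGraph) : Prop :=
  D.IsSubgraph G ∧ (D.IsCompleteOn (d + 1) ∨ D.ConnectedGE (d + 1)) ∧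
    ∀ D' : FinGraph, D'.IsSubgraph G → (D'.IsCompleteOn (d + 1) ∨ D'.ConnectedGE (d + 1)) →
      D.IsSubgraph D' → D' = D

/-- The strong `d`-cleavage property (for `d ≥ 4`): the `d`-cleavage property, and every
`(d+1)`-block is globally rigid in `ℝ^d`. -/
def HasStrongCleavage (d : ℕ) (G : FinGraph) : Prop :=
  HasCleavage d G ∧ ∀ D : FinGraph, IsBlock d G D → D.IsGloballyRigid d

-- auxiliary lemmas part 1
lemma even_iff_zmod (n : ℕ) : Even n ↔ (n : ZMod 2) = 0 := by
  rw [ZMod.natCast_eq_zero_iff]; exact even_iff_two_dvd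

lemma exists_mem_of_mem_vertexSet {S : Multiset (Finset ℕ)} {x : ℕ}
    (hx : x ∈ vertexSet S) : ∃ U ∈ S, x ∈ U := by
  simp only [vertexSet, Finset.mem_sup, Multiset.mem_toFinset, id] at hx
  exact hx

lemma circuit_nodup {k : ℕ} {S : Multiset (Finset ℕ)} (hS : IsSimpCircuit k S)
    (hnt : ¬ IsTrivialSimpCircuit S) : S.Nodup := by
  classical
  rw [Multiset.nodup_iff_count_le_one]
  by_contra h
  push_neg at h
  obtain ⟨U, hU2⟩ := h
  have hUS : U ∈ S := by rw [← Multiset.count_pos]; omega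
  set T : Multiset (Finset ℕ) := U ::ₘ U ::ₘ 0 with hT
  have hTle : T ≤ S := by
    rw [Multiset.le_iff_count]
    intro a
    by_cases ha : a = U
    · subst ha
      have : Multiset.count a T = 2 := by simp [hT]
      omega
    · have : Multiset.count a T = 0 :=
        Multiset.count_eq_zero_of_notMem (by simp [hT, ha])
      omega
  have hTcyc : IsSimpCycle k T := by
    constructor
    · intro W hW
      have hWU : W = U := by
        simp only [hT, Multiset.mem_cons, Multiset.notMem_zero, or_false] at hW
        tauto
      rw [hWU]; exact hS.1.1 U hUS
    · intro F hF
      show Even (Multiset.countP _ T)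
      simp only [hT, Multiset.countP_cons, Multiset.countP_zero]
      by_cases hFU : F ⊆ U <;> simp [hFU]
  by_cases hTS : T = S
  · exact hnt ⟨U, by rw [← hTS]; rfl⟩
  · exact hS.2.2 T hTle (by simp [hT]) hTS hTcyc

lemma exists_other_simplex {k : ℕ} {S : Multiset (Finset ℕ)} (hS : IsSimpCircuit k S)
    (hnd : S.Nodup) {U F : Finset ℕ} (hU : U ∈ S) (hF : F ⊆ U) (hFk : F.card = k) :
    ∃ U' ∈ S, F ⊆ U' ∧ U' ≠ U := by
  classical
  by_contra h
  push_neg at h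
  set M := S.filter (fun U' => F ⊆ U') with hM
  have hcard : Multiset.card M = simplexCount S F := by
    rw [simplexCount, Multiset.countP_eq_card_filter]
  have hUM : U ∈ M := Multiset.mem_filter.2 ⟨hU, hF⟩
  have hpos : 0 < Multiset.card M := Multiset.card_pos.2 fun h0 => by simp [h0] at hUM
  have heven : Even (Multiset.card M) := hcard ▸ hS.1.2 F hFk
  have h2 : 2 ≤ Multiset.card M := by
    obtain ⟨m, hm⟩ := heven; omega
  have hall : ∀ W ∈ M, U = W := by
    intro W hW
    obtain ⟨hWS, hFW⟩ := Multiset.mem_filter.1 hW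
    exact (h W hWS hFW).symm
  have hcnt : Multiset.count U M = Multiset.card M := Multiset.count_eq_card.2 hall
  have hle : Multiset.count U M ≤ Multiset.count U S :=
    Multiset.count_le_of_le U (Multiset.filter_le _ S)
  have h1 : Multiset.count U S ≤ 1 := Multiset.nodup_iff_count_le_one.1 hnd U
  omega

lemma card_vertexSet_ge {k : ℕ} (hk : 2 ≤ k) {S : Multiset (Finset ℕ)}
    (hS : IsSimpCircuit k S) (hnt : ¬ IsTrivialSimpCircuit S) :
    k + 2 ≤ (vertexSet S).card := by
  obtain ⟨U, hU⟩ := Multiset.exists_mem_of_ne_zero hS.2.1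
  have hUc : U.card = k + 1 := hS.1.1 U hU
  have hUne : U.Nonempty := by rw [← Finset.card_pos]; omega
  obtain ⟨u, hu⟩ := hUne
  have hFk : (U.erase u).card = k := by rw [Finset.card_erase_of_mem hu]; omega
  obtain ⟨U', hU', hFU', hne⟩ :=
    exists_other_simplex hS (circuit_nodup hS hnt) hU (Finset.erase_subset u U) hFk
  have hUc' : U'.card = k + 1 := hS.1.1 U' hU'
  have hns : ¬ U' ⊆ U := fun hsub => hne (Finset.eq_of_subset_of_card_le hsub (by omega))
  obtain ⟨v, hvU', hvU⟩ := Finset.not_subset.1 hns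
  have hsub : insert v U ⊆ vertexSet S := by
    intro w hw
    rcases Finset.mem_insert.1 hw with rfl | hw
    · exact mem_vertexSet_of_mem hU' hvU'
    · exact mem_vertexSet_of_mem hU hw
  calc k + 2 = (insert v U).card := by rw [Finset.card_insert_of_notMem hvU]; omega
    _ ≤ _ := Finset.card_le_card hsub
lemma even_sum_faces {k : ℕ} (hk : 1 ≤ k) (Ω E : Finset ℕ) (hE : E.card = k - 1)
    (T : Multiset (Finset ℕ)) (hT : ∀ U ∈ T, U.card = k + 1 ∧ U ⊆ Ω) :
    Even (∑ F ∈ (Ω.powersetCard k).filter (fun F => E ⊆ F), simplexCount T F) := by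
  classical
  induction T using Multiset.induction_on with
  | empty => simp [simplexCount]
  | cons U T ih =>
    have hU := hT U (Multiset.mem_cons_self U T)
    have hT' : ∀ W ∈ T, W.card = k + 1 ∧ W ⊆ Ω := fun W hW =>
      hT W (Multiset.mem_cons_of_mem hW)
    have hsplit : ∀ F : Finset ℕ, simplexCount (U ::ₘ T) F
        = simplexCount T F + if F ⊆ U then 1 else 0 := by
      intro F; rw [simplexCount, simplexCount, Multiset.countP_cons]
    simp only [hsplit, Finset.sum_add_distrib]
    apply Even.add (ih hT')
    rw [← Finset.card_filter]
    by_cases hEU : E ⊆ U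
    · have heq : ((Ω.powersetCard k).filter (fun F => E ⊆ F)).filter (fun F => F ⊆ U)
          = (U \ E).image (fun v => insert v E) := by
        ext F
        simp only [Finset.mem_filter, Finset.mem_powersetCard, Finset.mem_image,
          Finset.mem_sdiff]
        constructor
        · rintro ⟨⟨⟨hFΩ, hFk⟩, hEF⟩, hFU⟩
          have hcard : (F \ E).card = 1 := by rw [Finset.card_sdiff_of_subset hEF]; omega
          obtain ⟨v, hv⟩ := Finset.card_eq_one.1 hcard
          have hvF : v ∈ F \ E := hv ▸ Finset.mem_singleton_self v
          obtain ⟨hvF', hvE⟩ := Finset.mem_sdiff.1 hvF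
          refine ⟨v, ⟨hFU hvF', hvE⟩, ?_⟩
          apply Finset.eq_of_subset_of_card_le
          · intro w hw
            rcases Finset.mem_insert.1 hw with rfl | hw
            · exact hvF'
            · exact hEF hw
          · rw [Finset.card_insert_of_notMem hvE]; omega
        · rintro ⟨v, ⟨hvU, hvE⟩, rfl⟩
          refine ⟨⟨⟨?_, ?_⟩, Finset.subset_insert v E⟩, ?_⟩
          · intro w hw
            rcases Finset.mem_insert.1 hw with rfl | hw
            · exact hU.2 hvU
            · exact hU.2 (hEU hw)
          · rw [Finset.card_insert_of_notMem hvE]; omega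
          · intro w hw
            rcases Finset.mem_insert.1 hw with rfl | hw
            · exact hvU
            · exact hEU hw
      rw [heq, Finset.card_image_of_injOn, Finset.card_sdiff_of_subset hEU]
      · have : U.card - E.card = 2 := by omega
        rw [this]; exact even_two
      · intro v hv w hw hvw
        have hvw' : insert v E = insert w E := hvw
        have hvE : v ∉ E := (Finset.mem_sdiff.1 hv).2
        have : v ∈ insert w E := hvw' ▸ Finset.mem_insert_self v E
        rcases Finset.mem_insert.1 this with h | h
        · exact h
        · exact absurd h hvE
    · have heq : ((Ω.powersetCard k).filter (fun F => E ⊆ F)).filter (fun F => F ⊆ U)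
          = ∅ := by
        apply Finset.eq_empty_of_forall_notMem
        intro F hF
        obtain ⟨h1, hFU⟩ := Finset.mem_filter.1 hF
        obtain ⟨-, hEF⟩ := Finset.mem_filter.1 h1
        exact hEU (hEF.trans hFU)
      rw [heq]; simp

lemma even_card_odd_faces {k : ℕ} (hk : 1 ≤ k) (Ω E : Finset ℕ) (hE : E.card = k - 1)
    (T : Multiset (Finset ℕ)) (hT : ∀ U ∈ T, U.card = k + 1 ∧ U ⊆ Ω) :
    Even (((Ω.powersetCard k).filter
      (fun F => E ⊆ F ∧ Odd (simplexCount T F))).card) := by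
  classical
  have h1 := even_sum_faces hk Ω E hE T hT
  rw [Finset.even_sum_iff_even_card_odd] at h1
  rw [← Finset.filter_filter]
  exact h1

lemma mem_iff_of_even_pair {α : Type*} [DecidableEq α] {𝓕 : Finset α} {a b : α}
    (hab : a ≠ b) (hsub : ∀ c ∈ 𝓕, c = a ∨ c = b) (hev : Even 𝓕.card) :
    (a ∈ 𝓕 ↔ b ∈ 𝓕) := by
  constructor
  · intro h
    by_contra hc
    have h1 : 𝓕 = {a} := by
      ext c
      simp only [Finset.mem_singleton]
      constructor
      · intro hcF
        rcases hsub c hcF with rfl | rfl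
        · rfl
        · exact absurd hcF hc
      · rintro rfl; exact h
    rw [h1] at hev; simp at hev
  · intro h
    by_contra hc
    have h1 : 𝓕 = {b} := by
      ext c
      simp only [Finset.mem_singleton]
      constructor
      · intro hcF
        rcases hsub c hcF with rfl | rfl
        · exact absurd hcF hc
        · rfl
      · rintro rfl; exact h
    rw [h1] at hev; simp at hev

lemma face_eq_erase {k : ℕ} {X F : Finset ℕ} (hXc : X.card = k + 1) (hFk : F.card = k)
    (hFX : F ⊆ X) : ∃ z ∈ X, F = X.erase z := by
  obtain ⟨z, hzX, hzF⟩ : ∃ z ∈ X, z ∉ F := by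
    by_contra hc
    push_neg at hc
    have := Finset.card_le_card hc
    omega
  refine ⟨z, hzX, Finset.eq_of_subset_of_card_le ?_ ?_⟩
  · intro w hw
    exact Finset.mem_erase.2 ⟨fun h => hzF (h ▸ hw), hFX hw⟩
  · rw [Finset.card_erase_of_mem hzX]; omega
lemma parity_const {k : ℕ} (hk : 2 ≤ k) {S T : Multiset (Finset ℕ)} (hTS : T ≤ S)
    (hcx : IsMultiComplex k S) {X : Finset ℕ} (hXV : X ⊆ vertexSet S)
    (hXc : X.card = k + 1)
    (hodd : ∀ F : Finset ℕ, F.card = k → Odd (simplexCount T F) → F ⊆ X)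
    {x y : ℕ} (hx : x ∈ X) (hy : y ∈ X) (hxy : x ≠ y) :
    (Odd (simplexCount T (X.erase x)) ↔ Odd (simplexCount T (X.erase y))) := by
  classical
  set E := (X.erase x).erase y with hE
  have hyx : y ∈ X.erase x := Finset.mem_erase.2 ⟨hxy.symm, hy⟩
  have hEc : E.card = k - 1 := by
    rw [hE, Finset.card_erase_of_mem hyx, Finset.card_erase_of_mem hx]; omega
  have hsub : ∀ W ∈ T, W.card = k + 1 ∧ W ⊆ vertexSet S := fun W hW =>
    ⟨hcx W (Multiset.mem_of_le hTS hW),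
      fun z hz => mem_vertexSet_of_mem (Multiset.mem_of_le hTS hW) hz⟩
  have heven := even_card_odd_faces (by omega) (vertexSet S) E hEc T hsub
  set 𝓕 := ((vertexSet S).powersetCard k).filter
    (fun F => E ⊆ F ∧ Odd (simplexCount T F)) with h𝓕
  have hsubpair : ∀ F ∈ 𝓕, F = X.erase x ∨ F = X.erase y := by
    intro F hF
    obtain ⟨hmem, hEF, hoddF⟩ := Finset.mem_filter.1 hF
    obtain ⟨hFV, hFk⟩ := Finset.mem_powersetCard.1 hmem
    have hFX : F ⊆ X := hodd F hFk hoddF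
    obtain ⟨z, hzX, hFz⟩ := face_eq_erase hXc hFk hFX
    have hzF : z ∉ F := fun h => Finset.notMem_erase z X (hFz ▸ h)
    have hzE : z ∉ E := fun h => hzF (hEF h)
    have hzxy : z = y ∨ z = x := by
      by_contra hc
      push_neg at hc
      exact hzE (Finset.mem_erase.2 ⟨hc.1, Finset.mem_erase.2 ⟨hc.2, hzX⟩⟩)
    rcases hzxy with rfl | rfl
    · right; exact hFz
    · left; exact hFz
  have hErx : E ⊆ X.erase x := Finset.erase_subset y (X.erase x)
  have hEry : E ⊆ X.erase y := by
    rw [hE, Finset.erase_right_comm]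
    exact Finset.erase_subset x (X.erase y)
  have hcx' : (X.erase x).card = k := by rw [Finset.card_erase_of_mem hx]; omega
  have hcy' : (X.erase y).card = k := by rw [Finset.card_erase_of_mem hy]; omega
  have hmx : X.erase x ∈ 𝓕 ↔ Odd (simplexCount T (X.erase x)) := by
    simp only [h𝓕, Finset.mem_filter, Finset.mem_powersetCard]
    constructor
    · tauto
    · intro h
      exact ⟨⟨(Finset.erase_subset x X).trans hXV, hcx'⟩, hErx, h⟩
  have hmy : X.erase y ∈ 𝓕 ↔ Odd (simplexCount T (X.erase y)) := by
    simp only [h𝓕, Finset.mem_filter, Finset.mem_powersetCard]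
    constructor
    · tauto
    · intro h
      exact ⟨⟨(Finset.erase_subset y X).trans hXV, hcy'⟩, hEry, h⟩
  have hne : X.erase x ≠ X.erase y := by
    intro h
    have : y ∈ X.erase y := h ▸ hyx
    exact Finset.notMem_erase y X this
  rw [← hmx, ← hmy]
  exact mem_iff_of_even_pair hne hsubpair heven

lemma cycle_of_small_sep {k : ℕ} (hk : 1 ≤ k) {S T : Multiset (Finset ℕ)}
    (hTS : T ≤ S) (hcx : IsMultiComplex k S) (K : Finset ℕ) (hK : K.card ≤ k)
    (heven : ∀ F : Finset ℕ, F.card = k → ¬ F ⊆ K → Even (simplexCount T F)) :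
    IsSimpCycle k T := by
  classical
  have hcxT : IsMultiComplex k T := fun U hU => hcx U (Multiset.mem_of_le hTS hU)
  refine ⟨hcxT, ?_⟩
  intro F hFk
  by_cases hFK : F ⊆ K
  · have hcardK : K.card = k := by
      have := Finset.card_le_card hFK; omega
    have hKF : F = K := Finset.eq_of_subset_of_card_le hFK (by omega)
    by_contra hoddc
    rw [Nat.not_even_iff_odd] at hoddc
    have hpos : 0 < simplexCount T F := by
      rcases Nat.eq_zero_or_pos (simplexCount T F) with h0 | h
      · rw [h0] at hoddc; simp at hoddc
      · exact h
    obtain ⟨U, hUT, hFU⟩ := Multiset.countP_pos.1 hpos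
    have hFne : F.Nonempty := by rw [← Finset.card_pos]; omega
    obtain ⟨x, hxF⟩ := hFne
    have hEc : (F.erase x).card = k - 1 := by rw [Finset.card_erase_of_mem hxF]; omega
    have hsub : ∀ W ∈ T, W.card = k + 1 ∧ W ⊆ vertexSet S := fun W hW =>
      ⟨hcxT W hW, fun z hz => mem_vertexSet_of_mem (Multiset.mem_of_le hTS hW) hz⟩
    have heven2 := even_card_odd_faces hk (vertexSet S) (F.erase x) hEc T hsub
    have h1 : ((vertexSet S).powersetCard k).filter
        (fun F' => F.erase x ⊆ F' ∧ Odd (simplexCount T F')) = {F} := by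
      ext F'
      simp only [Finset.mem_filter, Finset.mem_powersetCard, Finset.mem_singleton]
      constructor
      · rintro ⟨⟨hF'V, hF'k⟩, hEF', hoddF'⟩
        have hF'K : F' ⊆ K := by
          by_contra hc
          exact (Nat.not_even_iff_odd.2 hoddF') (heven F' hF'k hc)
        have : F' = K := Finset.eq_of_subset_of_card_le hF'K (by omega)
        rw [this, ← hKF]
      · rintro rfl
        exact ⟨⟨fun z hz => mem_vertexSet_of_mem (Multiset.mem_of_le hTS hUT) (hFU hz), hFk⟩,
          Finset.erase_subset x _, hoddc⟩
    rw [h1] at heven2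
    simp at heven2
  · exact heven F hFk hFK

lemma parts_lemma {k : ℕ} {S : Multiset (Finset ℕ)} (hcyc : IsSimpCycle k S)
    (K : Finset ℕ) {x₀ y₀ : ℕ} (hx : x₀ ∈ vertexSet S) (hy : y₀ ∈ vertexSet S)
    (hxK : x₀ ∉ K) (hyK : y₀ ∉ K)
    (hsep : ¬ Relation.ReflTransGen ((graphOf S).deleteVerts K).Adj x₀ y₀) :
    ∃ A B : Multiset (Finset ℕ), A + B = S ∧
      (∃ U ∈ A, x₀ ∈ U) ∧ (∃ U ∈ B, y₀ ∈ U) ∧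
      (∀ U ∈ A, ∃ v ∈ U, v ∉ K) ∧
      (∀ F : Finset ℕ, F.card = k → ¬ F ⊆ K → Even (simplexCount A F)) ∧
      (∀ F : Finset ℕ, F.card = k → ¬ F ⊆ K → Even (simplexCount B F)) := by
  classical
  set R := ((graphOf S).deleteVerts K).Adj with hR
  set C : ℕ → Prop := fun a => Relation.ReflTransGen R x₀ a with hC
  have hprop : ∀ U ∈ S, ∀ u v : ℕ, u ∈ U → v ∈ U → u ∉ K → v ∉ K → C u → C v := by
    intro U hU u v huU hvU huK hvK hCu
    by_cases huv : u = v
    · exact huv ▸ hCu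
    · exact hCu.tail ⟨⟨huv, U, hU, huU, hvU⟩, huK, hvK⟩
  set p : Finset ℕ → Prop := fun U => ∃ v ∈ U, v ∉ K ∧ C v with hp
  refine ⟨S.filter p, S.filter (fun U => ¬ p U), Multiset.filter_add_not p S,
    ?_, ?_, ?_, ?_, ?_⟩
  · obtain ⟨U, hU, hxU⟩ := exists_mem_of_mem_vertexSet hx
    exact ⟨U, Multiset.mem_filter.2 ⟨hU, x₀, hxU, hxK, Relation.ReflTransGen.refl⟩, hxU⟩
  · obtain ⟨U, hU, hyU⟩ := exists_mem_of_mem_vertexSet hy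
    refine ⟨U, Multiset.mem_filter.2 ⟨hU, ?_⟩, hyU⟩
    rintro ⟨v, hvU, hvK, hvC⟩
    exact hsep (hprop U hU v y₀ hvU hyU hvK hyK hvC)
  · intro U hU
    obtain ⟨hUS, v, hvU, hvK, -⟩ := Multiset.mem_filter.1 hU
    exact ⟨v, hvU, hvK⟩
  · intro F hFk hFK
    obtain ⟨v, hvF, hvK⟩ := Finset.not_subset.1 hFK
    by_cases hex : ∃ U ∈ S.filter p, F ⊆ U
    · obtain ⟨U, hUA, hFU⟩ := hex
      obtain ⟨hUS, w, hwU, hwK, hwC⟩ := Multiset.mem_filter.1 hUA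
      have hvC : C v := hprop U hUS w v hwU (hFU hvF) hwK hvK hwC
      have heq : simplexCount (S.filter p) F = simplexCount S F := by
        rw [simplexCount, Multiset.countP_filter]
        apply Multiset.countP_congr rfl
        intro U' hU'
        simp only [eq_iff_iff]
        constructor
        · exact fun h => h.1
        · exact fun h => ⟨h, v, h hvF, hvK, hvC⟩
      rw [heq]; exact hcyc.2 F hFk
    · push_neg at hex
      have h0 : simplexCount (S.filter p) F = 0 := Multiset.countP_eq_zero.2 hex
      simp [h0]
  · intro F hFk hFK
    obtain ⟨v, hvF, hvK⟩ := Finset.not_subset.1 hFK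
    by_cases hex : ∃ U ∈ S.filter (fun U => ¬ p U), F ⊆ U
    · obtain ⟨U, hUB, hFU⟩ := hex
      obtain ⟨hUS, hnp⟩ := Multiset.mem_filter.1 hUB
      have hA0 : simplexCount (S.filter p) F = 0 := by
        apply Multiset.countP_eq_zero.2
        intro U' hU' hFU'
        obtain ⟨hU'S, w, hwU', hwK, hwC⟩ := Multiset.mem_filter.1 hU'
        exact hnp ⟨v, hFU hvF, hvK, hprop U' hU'S w v hwU' (hFU' hvF) hwK hvK hwC⟩
      have hev := hcyc.2 F hFk
      have hsum : simplexCount S F = simplexCount (S.filter p) F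
          + simplexCount (S.filter (fun U => ¬ p U)) F := by
        conv_lhs => rw [← Multiset.filter_add_not p S]
        rw [simplexCount, Multiset.countP_add]; rfl
      rw [hsum, hA0, zero_add] at hev
      exact hev
    · push_neg at hex
      have h0 : simplexCount (S.filter (fun U => ¬ p U)) F = 0 :=
        Multiset.countP_eq_zero.2 hex
      simp [h0]
lemma all_or_none {k : ℕ} (hk : 2 ≤ k) {S T : Multiset (Finset ℕ)} (hTS : T ≤ S)
    (hcx : IsMultiComplex k S) {X : Finset ℕ} (hXV : X ⊆ vertexSet S)
    (hXc : X.card = k + 1)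
    (hev : ∀ F : Finset ℕ, F.card = k → ¬ F ⊆ X → Even (simplexCount T F)) :
    (∀ z ∈ X, Odd (simplexCount T (X.erase z))) ∨
      (∀ z ∈ X, Even (simplexCount T (X.erase z))) := by
  have hodd : ∀ F : Finset ℕ, F.card = k → Odd (simplexCount T F) → F ⊆ X := by
    intro F hFk h
    by_contra hc
    exact (Nat.not_even_iff_odd.2 h) (hev F hFk hc)
  obtain ⟨z₀, hz₀⟩ : X.Nonempty := by rw [← Finset.card_pos]; omega
  by_cases h0 : Odd (simplexCount T (X.erase z₀))
  · left
    intro z hz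
    by_cases hzz : z = z₀
    · rwa [hzz]
    · exact (parity_const hk hTS hcx hXV hXc hodd hz hz₀ hzz).2 h0
  · right
    intro z hz
    rw [← Nat.not_odd_iff_even]
    by_cases hzz : z = z₀
    · rw [hzz]; exact Nat.not_odd_iff_even.2 (Nat.not_odd_iff_even.1 h0)
    · intro hodd'
      exact h0 ((parity_const hk hTS hcx hXV hXc hodd hz hz₀ hzz).1 hodd')

lemma cycle_of_none {k : ℕ} {S T : Multiset (Finset ℕ)} (hTS : T ≤ S)
    (hcx : IsMultiComplex k S) {X : Finset ℕ} (hXc : X.card = k + 1)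
    (hev : ∀ F : Finset ℕ, F.card = k → ¬ F ⊆ X → Even (simplexCount T F))
    (hnone : ∀ z ∈ X, Even (simplexCount T (X.erase z))) : IsSimpCycle k T := by
  refine ⟨fun U hU => hcx U (Multiset.mem_of_le hTS hU), ?_⟩
  intro F hFk
  by_cases hFX : F ⊆ X
  · obtain ⟨z, hzX, rfl⟩ := face_eq_erase hXc hFk hFX
    exact hnone z hzX
  · exact hev F hFk hFX

lemma glue_circuit {k : ℕ} {S A B : Multiset (Finset ℕ)} {X : Finset ℕ}
    (hS : IsSimpCircuit k S) (hAB : A + B = S) (hXc : X.card = k + 1)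
    (hB0 : B ≠ 0)
    (hallA : ∀ z ∈ X, Odd (simplexCount A (X.erase z)))
    (hevA : ∀ F : Finset ℕ, F.card = k → ¬ F ⊆ X → Even (simplexCount A F))
    (hallB : ∀ z ∈ X, Odd (simplexCount B (X.erase z)))
    (hevB : ∀ F : Finset ℕ, F.card = k → ¬ F ⊆ X → Even (simplexCount B F)) :
    IsSimpCircuit k (X ::ₘ A) := by
  classical
  have hAle : A ≤ S := hAB ▸ self_le_add_right A B
  have hcxS := hS.1.1
  constructor
  · constructor
    · intro U hU
      rcases Multiset.mem_cons.1 hU with rfl | hU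
      · exact hXc
      · exact hcxS U (Multiset.mem_of_le hAle hU)
    · intro F hFk
      have hcnt : simplexCount (X ::ₘ A) F
          = simplexCount A F + if F ⊆ X then 1 else 0 := by
        rw [simplexCount, simplexCount, Multiset.countP_cons]
      rw [hcnt]
      by_cases hFX : F ⊆ X
      · obtain ⟨z, hzX, rfl⟩ := face_eq_erase hXc hFk hFX
        have h1 := hallA z hzX
        rw [if_pos hFX]
        rw [Nat.odd_iff] at h1; rw [Nat.even_iff]; omega
      · rw [if_neg hFX, add_zero]; exact hevA F hFk hFX
  refine ⟨Multiset.cons_ne_zero, ?_⟩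
  intro T hTle hT0 hTS' hTcyc
  by_cases hXT : X ∈ T
  · set T₁ := T.erase X with hT₁
    have hTT : T = X ::ₘ T₁ := (Multiset.cons_erase hXT).symm
    have hT₁A : T₁ ≤ A := by
      have h := Multiset.erase_le_erase X hTle
      rwa [Multiset.erase_cons_head] at h
    set W := T₁ + B with hW
    have hWle : W ≤ S := by
      rw [← hAB]
      exact add_le_add hT₁A (le_refl B)
    have hWcyc : IsSimpCycle k W := by
      constructor
      · intro U hU
        exact hcxS U (Multiset.mem_of_le hWle hU)
      · intro F hFk
        have hTcnt := hTcyc.2 F hFk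
        have hcnt : simplexCount T F = simplexCount T₁ F + if F ⊆ X then 1 else 0 := by
          rw [hTT, simplexCount, simplexCount, Multiset.countP_cons]
        have hWcnt : simplexCount W F = simplexCount T₁ F + simplexCount B F := by
          rw [hW, simplexCount, Multiset.countP_add]; rfl
        rw [hWcnt]
        by_cases hFX : F ⊆ X
        · obtain ⟨z, hzX, hFz⟩ := face_eq_erase hXc hFk hFX
          have hB := hallB z hzX
          rw [← hFz] at hB
          rw [hcnt, if_pos hFX] at hTcnt
          rw [Nat.even_iff] at hTcnt ⊢; rw [Nat.odd_iff] at hB; omega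
        · have hB := hevB F hFk hFX
          rw [hcnt, if_neg hFX, add_zero] at hTcnt
          rw [Nat.even_iff] at hTcnt hB ⊢; omega
    have hW0 : W ≠ 0 := by
      intro h
      apply hB0
      have hcard := congrArg Multiset.card h
      rw [hW, Multiset.card_add] at hcard
      simp only [Multiset.card_zero] at hcard
      rw [← Multiset.card_eq_zero]
      omega
    have hWS : W ≠ S := by
      intro h
      apply hTS'
      rw [hTT]
      have h2 : T₁ + B = A + B := by rw [hAB]; exact h
      rw [add_right_cancel h2]
    exact hS.2.2 W hWle hW0 hWS hWcyc
  · have hTA : T ≤ A := by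
      rw [Multiset.le_iff_count]
      intro a
      have h1 := Multiset.count_le_of_le a hTle
      by_cases ha : a = X
      · have h0 : Multiset.count a T = 0 :=
          Multiset.count_eq_zero_of_notMem (fun hmem => hXT (ha ▸ hmem))
        rw [h0]
        exact Nat.zero_le _
      · rw [Multiset.count_cons_of_ne ha] at h1
        exact h1
    have hTleS : T ≤ S := hTA.trans hAle
    have hTneS : T ≠ S := by
      intro h
      have hc1 : Multiset.card T ≤ Multiset.card A := Multiset.card_le_card hTA
      have hc2 : Multiset.card A + Multiset.card B = Multiset.card S := by
        rw [← hAB, Multiset.card_add]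
      have hc3 : 0 < Multiset.card B := Multiset.card_pos.2 hB0
      rw [h] at hc1
      omega
    exact hS.2.2 T hTleS hT0 hTneS hTcyc
theorem connectivity_and_separators_of_circuit (k : ℕ) (hk : 2 ≤ k)
    (S : Multiset (Finset ℕ)) (hS : IsSimpCircuit k S)
    (hnt : ¬ IsTrivialSimpCircuit S) :
    (graphOf S).ConnectedGE (k + 1) ∧
      ∀ X : Finset ℕ, X ⊆ vertexSet S → X.card = k + 1 →
        ¬ ((graphOf S).deleteVerts X).Connected →
          (graphOf S).IsClique X ∧ X ∉ S ∧
            ∃ S' S'' : Multiset (Finset ℕ), IsSimpCircuit k S' ∧ IsSimpCircuit k S'' ∧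
              S' ∩ S'' = {X} ∧ S = symmDiffM S' S'' := by
  classical
  have hnd : S.Nodup := circuit_nodup hS hnt
  have hcyc := hS.1
  have hVc : k + 2 ≤ (vertexSet S).card := card_vertexSet_ge hk hS hnt
  have hverts : ∀ K : Finset ℕ, ((graphOf S).deleteVerts K).verts = vertexSet S \ K :=
    fun K => rfl
  constructor
  · refine ⟨?_, ?_⟩
    · show k + 1 + 1 ≤ (vertexSet S).card
      omega
    · intro K hKcard
      refine ⟨?_, ?_⟩
      · show ((graphOf S).deleteVerts K).verts.Nonempty
        rw [hverts]
        by_contra hemp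
        rw [Finset.not_nonempty_iff_eq_empty, Finset.sdiff_eq_empty_iff_subset] at hemp
        have := Finset.card_le_card hemp
        omega
      · intro x hxm y hym
        by_contra hsep
        rw [hverts, Finset.mem_sdiff] at hxm hym
        obtain ⟨hxV, hxK⟩ := hxm
        obtain ⟨hyV, hyK⟩ := hym
        obtain ⟨A, B, hAB, ⟨UA, hUA, hxUA⟩, ⟨UB, hUB, hyUB⟩, hAout, hevA, hevB⟩ :=
          parts_lemma hcyc K hxV hyV hxK hyK hsep
        have hAle : A ≤ S := hAB ▸ self_le_add_right A B
        have hAcyc : IsSimpCycle k A :=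
          cycle_of_small_sep (by omega) hAle hcyc.1 K (by omega) hevA
        have hA0 : A ≠ 0 := fun h0 => by
          rw [h0] at hUA; exact absurd hUA (Multiset.notMem_zero UA)
        have hAS : A ≠ S := by
          intro h
          have hc := congrArg Multiset.card hAB
          rw [Multiset.card_add, h] at hc
          have hB0 : B = 0 := by rw [← Multiset.card_eq_zero]; omega
          rw [hB0] at hUB
          exact absurd hUB (Multiset.notMem_zero UB)
        exact hS.2.2 A hAle hA0 hAS hAcyc
  · intro X hXV hXc hdisc
    have hsd : (vertexSet S \ X).Nonempty := by
      by_contra hemp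
      rw [Finset.not_nonempty_iff_eq_empty, Finset.sdiff_eq_empty_iff_subset] at hemp
      have := Finset.card_le_card hemp
      omega
    obtain ⟨x₀, hx₀, y₀, hy₀, hsep⟩ :
        ∃ x₀, x₀ ∈ vertexSet S \ X ∧ ∃ y₀, y₀ ∈ vertexSet S \ X ∧
          ¬ Relation.ReflTransGen ((graphOf S).deleteVerts X).Adj x₀ y₀ := by
      by_contra hc
      push_neg at hc
      exact hdisc ⟨hsd, fun x hx y hy => hc x hx y hy⟩
    obtain ⟨hx₀V, hx₀X⟩ := Finset.mem_sdiff.1 hx₀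
    obtain ⟨hy₀V, hy₀X⟩ := Finset.mem_sdiff.1 hy₀
    obtain ⟨A, B, hAB, ⟨UA, hUA, hxUA⟩, ⟨UB, hUB, hyUB⟩, hAout, hevA, hevB⟩ :=
      parts_lemma hcyc X hx₀V hy₀V hx₀X hy₀X hsep
    have hAle : A ≤ S := hAB ▸ self_le_add_right A B
    have hBle : B ≤ S := hAB ▸ self_le_add_left B A
    have hA0 : A ≠ 0 := fun h0 => by
      rw [h0] at hUA; exact absurd hUA (Multiset.notMem_zero UA)
    have hB0 : B ≠ 0 := fun h0 => by
      rw [h0] at hUB; exact absurd hUB (Multiset.notMem_zero UB)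
    have hAneS : A ≠ S := by
      intro h
      have hc := congrArg Multiset.card hAB
      rw [Multiset.card_add, h] at hc
      exact hB0 (by rw [← Multiset.card_eq_zero]; omega)
    have hBneS : B ≠ S := by
      intro h
      have hc := congrArg Multiset.card hAB
      rw [Multiset.card_add, h] at hc
      exact hA0 (by rw [← Multiset.card_eq_zero]; omega)
    have hallA : ∀ z ∈ X, Odd (simplexCount A (X.erase z)) := by
      rcases all_or_none hk hAle hcyc.1 hXV hXc hevA with h | h
      · exact h
      · exact absurd (cycle_of_none hAle hcyc.1 hXc hevA h) (hS.2.2 A hAle hA0 hAneS)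
    have hallB : ∀ z ∈ X, Odd (simplexCount B (X.erase z)) := by
      rcases all_or_none hk hBle hcyc.1 hXV hXc hevB with h | h
      · exact h
      · exact absurd (cycle_of_none hBle hcyc.1 hXc hevB h) (hS.2.2 B hBle hB0 hBneS)
    have hXS : X ∉ S := by
      intro hXmem
      have hXA : X ∉ A := by
        intro h
        obtain ⟨v, hvX, hvnX⟩ := hAout X h
        exact hvnX hvX
      have hXB : X ∈ B := by
        have hcnt : Multiset.count X A + Multiset.count X B = Multiset.count X S := by
          rw [← hAB, Multiset.count_add]
        have h1 : Multiset.count X A = 0 := Multiset.count_eq_zero_of_notMem hXA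
        have h2 : 0 < Multiset.count X S := Multiset.count_pos.2 hXmem
        rw [← Multiset.count_pos]
        omega
      set T := B.erase X with hT
      have hBT : B = X ::ₘ T := (Multiset.cons_erase hXB).symm
      have hTle : T ≤ S := (Multiset.erase_le X B).trans hBle
      have hTcyc : IsSimpCycle k T := by
        refine ⟨fun U hU => hcyc.1 U (Multiset.mem_of_le hTle hU), ?_⟩
        intro F hFk
        have hcnt : simplexCount B F = simplexCount T F + if F ⊆ X then 1 else 0 := by
          rw [hBT, simplexCount, simplexCount, Multiset.countP_cons]
        by_cases hFX : F ⊆ X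
        · obtain ⟨z, hzX, hFz⟩ := face_eq_erase hXc hFk hFX
          have h1 := hallB z hzX
          rw [← hFz] at h1
          rw [hcnt, if_pos hFX] at h1
          rw [Nat.odd_iff] at h1; rw [Nat.even_iff]; omega
        · have h1 := hevB F hFk hFX
          rw [hcnt, if_neg hFX, add_zero] at h1
          exact h1
      have hT0 : T ≠ 0 := by
        intro h
        have hUBne : UB ≠ X := fun hh => hy₀X (hh ▸ hyUB)
        have hmem : UB ∈ X ::ₘ T := hBT ▸ hUB
        rcases Multiset.mem_cons.1 hmem with h1 | h1
        · exact hUBne h1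
        · rw [h] at h1; exact Multiset.notMem_zero UB h1
      have hTneS : T ≠ S := by
        intro h
        have hc1 := congrArg Multiset.card hBT
        rw [Multiset.card_cons, h] at hc1
        have hc2 : Multiset.card B ≤ Multiset.card S := Multiset.card_le_card hBle
        have hc3 : 0 < Multiset.card A := Multiset.card_pos.2 hA0
        have hc4 : Multiset.card A + Multiset.card B = Multiset.card S := by
          rw [← hAB, Multiset.card_add]
        omega
      exact hS.2.2 T hTle hT0 hTneS hTcyc
    have hXA : X ∉ A := fun h => hXS (Multiset.mem_of_le hAle h)
    have hXB : X ∉ B := fun h => hXS (Multiset.mem_of_le hBle h)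
    refine ⟨?_, hXS, X ::ₘ A, X ::ₘ B, ?_, ?_, ?_, ?_⟩
    · refine ⟨hXV, ?_⟩
      intro x hx y hy hxy
      have hpair : ((X.erase x).erase y).Nonempty := by
        rw [← Finset.card_pos, Finset.card_erase_of_mem (Finset.mem_erase.2 ⟨hxy.symm, hy⟩),
          Finset.card_erase_of_mem hx]
        omega
      obtain ⟨z, hz⟩ := hpair
      obtain ⟨hzy, hz'⟩ := Finset.mem_erase.1 hz
      obtain ⟨hzx, hzX⟩ := Finset.mem_erase.1 hz'
      have hodd := hallA z hzX
      have hpos : 0 < simplexCount A (X.erase z) := by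
        rcases Nat.eq_zero_or_pos (simplexCount A (X.erase z)) with h0 | h
        · rw [h0] at hodd; simp at hodd
        · exact h
      obtain ⟨U, hUmem, hFU⟩ := Multiset.countP_pos.1 hpos
      exact ⟨hxy, U, Multiset.mem_of_le hAle hUmem,
        hFU (Finset.mem_erase.2 ⟨fun h => hzx h.symm, hx⟩),
        hFU (Finset.mem_erase.2 ⟨fun h => hzy h.symm, hy⟩)⟩
    · exact glue_circuit hS hAB hXc hB0 hallA hevA hallB hevB
    · exact glue_circuit hS (by rw [add_comm]; exact hAB) hXc hA0 hallB hevB hallA hevA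
    · rw [Multiset.ext]
      intro a
      rw [Multiset.count_inter, Multiset.count_cons, Multiset.count_cons,
        Multiset.count_singleton]
      have hsum : Multiset.count a A + Multiset.count a B = Multiset.count a S := by
        rw [← hAB, Multiset.count_add]
      have h1 : Multiset.count a S ≤ 1 := Multiset.nodup_iff_count_le_one.1 hnd a
      by_cases ha : a = X
      · have hA' : Multiset.count a A = 0 := by
          rw [ha]; exact Multiset.count_eq_zero_of_notMem hXA
        have hB' : Multiset.count a B = 0 := by
          rw [ha]; exact Multiset.count_eq_zero_of_notMem hXB
        rw [if_pos ha, hA', hB']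
        simp
      · rw [if_neg ha]
        simp only [add_zero]
        have h2 : Multiset.count a A = 0 ∨ Multiset.count a B = 0 := by omega
        rcases h2 with h2 | h2 <;> simp [h2]
    · rw [Multiset.ext]
      intro a
      rw [symmDiffM, Multiset.count_add, Multiset.count_sub, Multiset.count_sub,
        Multiset.count_cons, Multiset.count_cons]
      have hsum : Multiset.count a A + Multiset.count a B = Multiset.count a S := by
        rw [← hAB, Multiset.count_add]
      have h1 : Multiset.count a S ≤ 1 := Multiset.nodup_iff_count_le_one.1 hnd a
      by_cases ha : a = X
      · have hA' : Multiset.count a A = 0 := by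
          rw [ha]; exact Multiset.count_eq_zero_of_notMem hXA
        have hB' : Multiset.count a B = 0 := by
          rw [ha]; exact Multiset.count_eq_zero_of_notMem hXB
        have hS' : Multiset.count a S = 0 := by
          rw [ha]; exact Multiset.count_eq_zero_of_notMem hXS
        rw [if_pos ha, hA', hB', hS']
      · rw [if_neg ha, add_zero, add_zero]
        omega
end

section
/- Let k ≥ 1, let S be a simplicial k-cycle, and let u, v be distinct vertices of S. Then the contraction S/uv is a simplicial k-cycle. -/
theorem contraction_of_cycle (k : ℕ) (hk : 1 ≤ k)
    (S : Multiset (Finset ℕ)) (hS : IsSimpCycle k S)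
    (u v : ℕ) (hu : u ∈ vertexSet S) (hv : v ∈ vertexSet S) (hne : u ≠ v) :
    IsSimpCycle k (contractS S u v) := by
  classical
  obtain ⟨hMC, hEv⟩ := hS
  constructor
  · -- multicomplex
    intro W hW
    simp only [contractS, Multiset.mem_map, Multiset.mem_filter] at hW
    obtain ⟨U, ⟨hUS, hUP⟩, rfl⟩ := hW
    by_cases hvU : v ∈ U
    · have huU : u ∉ U := fun h => hUP ⟨h, hvU⟩
      simp only [if_pos hvU]
      rw [Finset.card_insert_of_notMem (fun h => huU (Finset.mem_of_mem_erase h)),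
        Finset.card_erase_of_mem hvU, hMC U hUS]
      omega
    · simp only [if_neg hvU]
      exact hMC U hUS
  · intro F hF
    have key : simplexCount (contractS S u v) F =
        Multiset.countP (fun U =>
          (F ⊆ (if v ∈ U then insert u (U.erase v) else U)) ∧ ¬(u ∈ U ∧ v ∈ U)) S := by
      rw [simplexCount, contractS, Multiset.countP_map, ← Multiset.countP_eq_card_filter,
        Multiset.countP_filter]
    by_cases hvF : v ∈ F
    · rw [key, Multiset.countP_eq_zero.2]
      · exact Even.zero
      rintro U hU ⟨hsub, hP⟩
      have hvφ := hsub hvF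
      by_cases hvU : v ∈ U
      · rw [if_pos hvU] at hvφ
        rcases Finset.mem_insert.1 hvφ with h | h
        · exact hne h.symm
        · exact (Finset.notMem_erase v U) h
      · rw [if_neg hvU] at hvφ
        exact hvU hvφ
    · by_cases huF : u ∈ F
      · -- case u ∈ F, v ∉ F
        set F0 := F.erase u with hF0
        have hvF0 : v ∉ F0 := fun h => hvF (Finset.mem_of_mem_erase h)
        have huF0 : u ∉ F0 := Finset.notMem_erase u F
        have hF0card : F0.card = k - 1 := by
          rw [hF0, Finset.card_erase_of_mem huF, hF]
        set G2 := insert v F0 with hG2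
        have hG2card : G2.card = k := by
          rw [hG2, Finset.card_insert_of_notMem hvF0, hF0card]
          omega
        have hF0F : F0 ⊆ F := Finset.erase_subset u F
        set X := Multiset.countP (fun U => F ⊆ U ∧ v ∈ U) S with hX
        set A := Multiset.countP (fun U => F ⊆ U ∧ v ∉ U) S with hA
        set B := Multiset.countP (fun U => F0 ⊆ U ∧ v ∈ U ∧ u ∉ U) S with hB
        have h1 : simplexCount S F = X + A := by
          rw [simplexCount, Multiset.countP_eq_countP_filter_add _ _ (fun U => v ∈ U),
            Multiset.countP_filter, Multiset.countP_filter]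
        have h2 : simplexCount S G2 = X + B := by
          rw [simplexCount, Multiset.countP_eq_countP_filter_add _ _ (fun U => u ∈ U),
            Multiset.countP_filter, Multiset.countP_filter, hX, hB]
          congr 1
          · apply Multiset.countP_congr rfl
            intro U _
            simp only [eq_iff_iff]
            constructor
            · rintro ⟨hGU, huU⟩
              refine ⟨fun x hx => ?_, hGU (Finset.mem_insert_self v F0)⟩
              rcases eq_or_ne x u with rfl | hxu
              · exact huU
              · exact hGU (Finset.mem_insert_of_mem (Finset.mem_erase.2 ⟨hxu, hx⟩))
            · rintro ⟨hFU, hvU⟩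
              exact ⟨Finset.insert_subset hvU (hF0F.trans hFU), hFU huF⟩
          · apply Multiset.countP_congr rfl
            intro U _
            simp only [eq_iff_iff]
            constructor
            · rintro ⟨hGU, huU⟩
              exact ⟨(Finset.insert_subset_iff.1 hGU).2, (Finset.insert_subset_iff.1 hGU).1, huU⟩
            · rintro ⟨hF0U, hvU, huU⟩
              exact ⟨Finset.insert_subset hvU hF0U, huU⟩
        have h3 : simplexCount (contractS S u v) F = B + A := by
          rw [key, Multiset.countP_eq_countP_filter_add _ _ (fun U => v ∈ U),
            Multiset.countP_filter, Multiset.countP_filter, hB, hA]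
          congr 1
          · apply Multiset.countP_congr rfl
            intro U _
            simp only [eq_iff_iff]
            constructor
            · rintro ⟨⟨hsub, hP⟩, hvU⟩
              have huU : u ∉ U := fun h => hP ⟨h, hvU⟩
              rw [if_pos hvU] at hsub
              refine ⟨fun x hx => ?_, hvU, huU⟩
              have hxF : x ∈ F := hF0F hx
              rcases Finset.mem_insert.1 (hsub hxF) with h | h
              · exact absurd (h ▸ hx) huF0
              · exact Finset.mem_of_mem_erase h
            · rintro ⟨hF0U, hvU, huU⟩
              refine ⟨⟨?_, fun h => huU h.1⟩, hvU⟩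
              rw [if_pos hvU]
              intro x hx
              rcases eq_or_ne x u with rfl | hxu
              · exact Finset.mem_insert_self x _
              · refine Finset.mem_insert_of_mem (Finset.mem_erase.2 ⟨?_, hF0U (Finset.mem_erase.2 ⟨hxu, hx⟩)⟩)
                rintro rfl; exact hvF hx
          · apply Multiset.countP_congr rfl
            intro U _
            simp only [eq_iff_iff]
            constructor
            · rintro ⟨⟨hsub, _⟩, hvU⟩
              rw [if_neg hvU] at hsub
              exact ⟨hsub, hvU⟩
            · rintro ⟨hFU, hvU⟩
              refine ⟨⟨?_, fun h => hvU h.2⟩, hvU⟩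
              rw [if_neg hvU]; exact hFU
        have hEF := hEv F hF
        have hEG := hEv G2 hG2card
        rw [h1] at hEF; rw [h2] at hEG
        rw [h3]
        have hsum : Even ((B + A) + (X + X)) := by
          have : (B + A) + (X + X) = (X + A) + (X + B) := by ring
          rw [this]
          exact hEF.add hEG
        exact (Nat.even_add.mp hsum).mpr (Even.add_self X)
      · -- case u ∉ F, v ∉ F
        rw [key]
        have : Multiset.countP (fun U =>
            (F ⊆ (if v ∈ U then insert u (U.erase v) else U)) ∧ ¬(u ∈ U ∧ v ∈ U)) S
            = simplexCount S F := by
          rw [simplexCount]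
          apply Multiset.countP_congr rfl
          intro U hU
          simp only [eq_iff_iff]
          constructor
          · rintro ⟨hsub, hP⟩
            by_cases hvU : v ∈ U
            · rw [if_pos hvU] at hsub
              intro x hx
              rcases Finset.mem_insert.1 (hsub hx) with h | h
              · exact absurd (h ▸ hx) huF
              · exact Finset.mem_of_mem_erase h
            · rwa [if_neg hvU] at hsub
          · intro hFU
            have hP : ¬(u ∈ U ∧ v ∈ U) := by
              rintro ⟨huU, hvU⟩
              have hsub : insert u (insert v F) ⊆ U :=
                Finset.insert_subset huU (Finset.insert_subset hvU hFU)
              have hcard : (insert u (insert v F)).card = k + 2 := by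
                rw [Finset.card_insert_of_notMem (by
                  simp only [Finset.mem_insert]
                  rintro (rfl | h)
                  exacts [hne rfl, huF h]),
                  Finset.card_insert_of_notMem hvF, hF]
              have := Finset.card_le_card hsub
              rw [hcard, hMC U hU] at this
              omega
            refine ⟨?_, hP⟩
            by_cases hvU : v ∈ U
            · rw [if_pos hvU]
              intro x hx
              refine Finset.mem_insert_of_mem (Finset.mem_erase.2 ⟨?_, hFU hx⟩)
              rintro rfl; exact hvF hx
            · rw [if_neg hvU]; exact hFU
        rw [this]
        exact hEv F hF
end

section
/- Let k ≥ 1, let S be a simplicial k-complex, and let u, v be distinct vertices of S. Let S† be the set of all (k+1)-element sets K ⊆ V(S) with {u,v} ⊆ K such that both K∖{u} and K∖{v} are contained in some simplex of S, and let S* = {K ∈ S† : K∖{u} ∈ ∂S and K∖{v} ∈ ∂S}. Then: (a) if S △ S′ is a simplicial k-cycle for some S′ ⊆ S†, then S′ = S*; (b) S/uv is a simplicial k-cycle if and only if S △ S* is a simplicial k-cycle; and (c) if S/uv is a simplicial k-circuit, then S △ S* is a simplicial k-circuit. Here △ denotes symmetric difference. -/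
namespace AuxCJ
section
open scoped Classical

lemma simplexCount_add (S T : Multiset (Finset ℕ)) (F : Finset ℕ) :
    simplexCount (S + T) F = simplexCount S F + simplexCount T F := by
  simp [simplexCount, Multiset.countP_add]

lemma countP_sc (S T : Multiset (Finset ℕ)) (F : Finset ℕ) :
    simplexCount (symmDiffM S T) F + 2 * simplexCount (S ∩ T) F
      = simplexCount S F + simplexCount T F := by
  have h : symmDiffM S T + (S ∩ T) + (S ∩ T) = S + T := by
    ext a
    simp only [Multiset.count_add, symmDiffM, Multiset.count_sub, Multiset.count_inter]
    omega
  have := congrArg (fun M => simplexCount M F) h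
  simp only [simplexCount_add] at this
  omega

lemma simplexCount_symmDiff_parity (S T : Multiset (Finset ℕ)) (F : Finset ℕ) :
    (Even (simplexCount (symmDiffM S T) F)) ↔
      (Odd (simplexCount S F) ↔ Odd (simplexCount T F)) := by
  have := countP_sc S T F
  rw [Nat.even_iff, Nat.odd_iff, Nat.odd_iff]
  omega

lemma mem_symmDiff {S T : Multiset (Finset ℕ)} {U : Finset ℕ} (h : U ∈ symmDiffM S T) :
    U ∈ S ∨ U ∈ T := by
  rcases Multiset.mem_add.1 h with h | h
  · exact Or.inl (Multiset.mem_of_le (Multiset.sub_le_self _ _) h)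
  · exact Or.inr (Multiset.mem_of_le (Multiset.sub_le_self _ _) h)

lemma mem_faceDag_iff {k : ℕ} {S : Multiset (Finset ℕ)} {u v : ℕ} {K : Finset ℕ} :
    K ∈ faceDag k S u v ↔ K ⊆ vertexSet S ∧ K.card = k + 1 ∧ u ∈ K ∧ v ∈ K ∧
      (∃ U ∈ S, K.erase u ⊆ U) ∧ (∃ U ∈ S, K.erase v ⊆ U) := by
  simp only [faceDag, Multiset.mem_filter, ← Finset.mem_def, Finset.mem_powersetCard]
  tauto

lemma nodup_faceDag (k : ℕ) (S : Multiset (Finset ℕ)) (u v : ℕ) :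
    (faceDag k S u v).Nodup :=
  Multiset.Nodup.filter _ ((vertexSet S).powersetCard (k + 1)).nodup

lemma faceStar_le_faceDag (k : ℕ) (S : Multiset (Finset ℕ)) (u v : ℕ) :
    faceStar k S u v ≤ faceDag k S u v := Multiset.filter_le _ _

lemma nodup_faceStar (k : ℕ) (S : Multiset (Finset ℕ)) (u v : ℕ) :
    (faceStar k S u v).Nodup := Multiset.Nodup.filter _ (nodup_faceDag k S u v)

lemma mem_faceStar_iff {k : ℕ} {S : Multiset (Finset ℕ)} {u v : ℕ} {K : Finset ℕ} :
    K ∈ faceStar k S u v ↔ K ∈ faceDag k S u v ∧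
      K.erase u ∈ boundarySet k S ∧ K.erase v ∈ boundarySet k S := by
  simp [faceStar, Multiset.mem_filter]

/-- counting via a unique vertex: members of `S'` all contain `u` and have `k+1` elements. -/
lemma count_unique {k : ℕ} {S' : Multiset (Finset ℕ)} {u : ℕ}
    (hnd : S'.Nodup) (hall : ∀ K ∈ S', u ∈ K ∧ K.card = k + 1)
    {F : Finset ℕ} (hF : F.card = k) (huF : u ∉ F) :
    simplexCount S' F = if insert u F ∈ S' then 1 else 0 := by
  have key : ∀ U ∈ S', F ⊆ U ↔ U = insert u F := by
    intro U hU
    obtain ⟨huU, hcard⟩ := hall U hU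
    constructor
    · intro hFU
      refine (Finset.eq_of_subset_of_card_le ?_ ?_).symm
      · intro x hx
        rcases Finset.mem_insert.1 hx with rfl | hx
        · exact huU
        · exact hFU hx
      · rw [hcard, Finset.card_insert_of_notMem huF, hF]
    · rintro rfl
      exact Finset.subset_insert _ _
  have : simplexCount S' F = Multiset.countP (fun U => U = insert u F) S' := by
    simp only [simplexCount, Multiset.countP_eq_card_filter]
    rw [Multiset.filter_congr key]
  rw [this]
  rw [Multiset.countP_eq_card_filter, Multiset.filter_eq', Multiset.card_replicate]
  split_ifs with h
  · exact Multiset.count_eq_one_of_mem hnd h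
  · exact Multiset.count_eq_zero_of_notMem h

lemma count_zero_of_two {k : ℕ} {S' : Multiset (Finset ℕ)} {u v : ℕ} (hne : u ≠ v)
    (hall : ∀ K ∈ S', u ∈ K ∧ v ∈ K ∧ K.card = k + 1)
    {F : Finset ℕ} (hF : F.card = k) (huF : u ∉ F) (hvF : v ∉ F) :
    simplexCount S' F = 0 := by
  rw [simplexCount, Multiset.countP_eq_zero]
  intro K hK hFK
  obtain ⟨huK, hvK, hcard⟩ := hall K hK
  have : insert u (insert v F) ⊆ K := by
    intro x hx
    rcases Finset.mem_insert.1 hx with rfl | hx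
    · exact huK
    rcases Finset.mem_insert.1 hx with rfl | hx
    · exact hvK
    · exact hFK hx
  have := Finset.card_le_card this
  rw [Finset.card_insert_of_notMem (by simp [huF, hne]), Finset.card_insert_of_notMem hvF,
    hF, hcard] at this
  omega

end
end AuxCJ
namespace AuxCJ

lemma countP_split (p q : Finset ℕ → Prop) [DecidablePred p] [DecidablePred q] (C : Multiset (Finset ℕ)) :
    Multiset.countP p C =
      Multiset.countP (fun U => p U ∧ q U) C + Multiset.countP (fun U => p U ∧ ¬ q U) C := by
  rw [Multiset.countP_eq_countP_filter_add _ p q, Multiset.countP_filter, Multiset.countP_filter]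

lemma contract_count (C : Multiset (Finset ℕ)) (u v : ℕ) (F : Finset ℕ) :
    simplexCount (contractS C u v) F = Multiset.countP
      (fun U => (F ⊆ (if v ∈ U then insert u (U.erase v) else U)) ∧ ¬(u ∈ U ∧ v ∈ U)) C := by
  rw [simplexCount, contractS, Multiset.countP_map, ← Multiset.countP_eq_card_filter,
    Multiset.countP_filter]

lemma contract_multicomplex {k : ℕ} {C : Multiset (Finset ℕ)} (hC : IsMultiComplex k C)
    (u v : ℕ) : IsMultiComplex k (contractS C u v) := by
  intro W hW
  simp only [contractS, Multiset.mem_map, Multiset.mem_filter] at hW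
  obtain ⟨U, ⟨hU, hP⟩, rfl⟩ := hW
  split_ifs with hvU
  · have huU : u ∉ U := fun h => hP ⟨h, hvU⟩
    rw [Finset.card_insert_of_notMem (fun h => huU (Finset.mem_of_mem_erase h)),
      Finset.card_erase_of_mem hvU, hC U hU]
    have : 1 ≤ k + 1 := Nat.le_add_left _ _
    omega
  · exact hC U hU

lemma contract_count_of_mem_v (C : Multiset (Finset ℕ)) {u v : ℕ} (hne : u ≠ v)
    {F : Finset ℕ} (hvF : v ∈ F) :
    simplexCount (contractS C u v) F = 0 := by
  rw [contract_count, Multiset.countP_eq_zero]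
  rintro U hU ⟨hFU, hP⟩
  have := hFU hvF
  split_ifs at this with hvU
  · rcases Finset.mem_insert.1 this with h | h
    · exact hne h.symm
    · exact Finset.notMem_erase v _ h
  · exact hvU this

lemma contract_count_of_not_mem {k : ℕ} {C : Multiset (Finset ℕ)} (hC : IsMultiComplex k C)
    {u v : ℕ} (hne : u ≠ v) {F : Finset ℕ} (hF : F.card = k) (huF : u ∉ F) (hvF : v ∉ F) :
    simplexCount (contractS C u v) F = simplexCount C F := by
  rw [contract_count, simplexCount]
  apply Multiset.countP_congr rfl
  intro U hU
  apply propext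
  constructor
  · rintro ⟨hFU, -⟩
    split_ifs at hFU with hvU
    · intro x hx
      have := hFU hx
      rcases Finset.mem_insert.1 this with rfl | h
      · exact absurd hx huF
      · exact Finset.mem_of_mem_erase h
    · exact hFU
  · intro hFU
    refine ⟨?_, ?_⟩
    · split_ifs with hvU
      · intro x hx
        exact Finset.mem_insert_of_mem (Finset.mem_erase_of_ne_of_mem (fun h => hvF (h ▸ hx)) (hFU hx))
      · exact hFU
    · rintro ⟨huU, hvU⟩
      have : insert u (insert v F) ⊆ U := by
        intro x hx
        rcases Finset.mem_insert.1 hx with rfl | hx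
        · exact huU
        rcases Finset.mem_insert.1 hx with rfl | hx
        · exact hvU
        · exact hFU hx
      have hle := Finset.card_le_card this
      rw [Finset.card_insert_of_notMem (by simp [huF, hne]),
        Finset.card_insert_of_notMem hvF, hF, hC U hU] at hle
      omega

/-- the key contraction identity for `u ∈ F`, `v ∉ F`, with `G = insert v (F.erase u)`. -/
lemma contract_count_of_mem_u (C : Multiset (Finset ℕ)) {u v : ℕ} (hne : u ≠ v)
    {F : Finset ℕ} (huF : u ∈ F) (hvF : v ∉ F) :
    simplexCount C F + simplexCount C (insert v (F.erase u)) =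
      simplexCount (contractS C u v) F
        + 2 * Multiset.countP (fun U => F ⊆ U ∧ insert v (F.erase u) ⊆ U) C := by
  classical
  set G := insert v (F.erase u) with hG
  have hGu : u ∉ G := by
    simp [hG, hne, Finset.notMem_erase]
  have hGv : v ∈ G := Finset.mem_insert_self _ _
  -- split counts
  have h1 : simplexCount C F = Multiset.countP (fun U => F ⊆ U ∧ v ∈ U) C
      + Multiset.countP (fun U => F ⊆ U ∧ ¬ v ∈ U) C := countP_split (fun U => F ⊆ U) (fun U => v ∈ U) C
  have h2 : simplexCount C G = Multiset.countP (fun U => G ⊆ U ∧ u ∈ U) C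
      + Multiset.countP (fun U => G ⊆ U ∧ ¬ u ∈ U) C := countP_split (fun U => G ⊆ U) (fun U => u ∈ U) C
  have h3 : Multiset.countP (fun U => F ⊆ U ∧ v ∈ U) C
      = Multiset.countP (fun U => F ⊆ U ∧ G ⊆ U) C := by
    apply Multiset.countP_congr rfl
    intro U hU
    apply propext
    constructor
    · rintro ⟨hFU, hvU⟩
      exact ⟨hFU, Finset.insert_subset hvU (fun x hx => hFU (Finset.mem_of_mem_erase hx))⟩
    · rintro ⟨hFU, hGU⟩
      exact ⟨hFU, hGU hGv⟩
  have h4 : Multiset.countP (fun U => G ⊆ U ∧ u ∈ U) C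
      = Multiset.countP (fun U => F ⊆ U ∧ G ⊆ U) C := by
    apply Multiset.countP_congr rfl
    intro U hU
    apply propext
    constructor
    · rintro ⟨hGU, huU⟩
      refine ⟨?_, hGU⟩
      intro x hx
      by_cases hxu : x = u
      · exact hxu ▸ huU
      · exact hGU (Finset.mem_insert_of_mem (Finset.mem_erase_of_ne_of_mem hxu hx))
    · rintro ⟨hFU, hGU⟩
      exact ⟨hGU, hFU huF⟩
  have h5 : simplexCount (contractS C u v) F
      = Multiset.countP (fun U => G ⊆ U ∧ ¬ u ∈ U) C
        + Multiset.countP (fun U => F ⊆ U ∧ ¬ v ∈ U) C := by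
    rw [contract_count]
    rw [countP_split (fun U => (F ⊆ (if v ∈ U then insert u (U.erase v) else U)) ∧ ¬(u ∈ U ∧ v ∈ U))
      (fun U => v ∈ U) C]
    congr 1
    · apply Multiset.countP_congr rfl
      intro U hU
      apply propext
      constructor
      · rintro ⟨⟨hFU, hP⟩, hvU⟩
        rw [if_pos hvU] at hFU
        have huU : u ∉ U := fun h => hP ⟨h, hvU⟩
        refine ⟨Finset.insert_subset hvU ?_, huU⟩
        intro x hx
        have hxu : x ≠ u := Finset.ne_of_mem_erase hx
        have := hFU (Finset.mem_of_mem_erase hx)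
        rcases Finset.mem_insert.1 this with h | h
        · exact absurd h hxu
        · exact Finset.mem_of_mem_erase h
      · rintro ⟨hGU, huU⟩
        have hvU : v ∈ U := hGU hGv
        refine ⟨⟨?_, fun h => huU h.1⟩, hvU⟩
        rw [if_pos hvU]
        intro x hx
        by_cases hxu : x = u
        · exact hxu ▸ Finset.mem_insert_self _ _
        · refine Finset.mem_insert_of_mem (Finset.mem_erase_of_ne_of_mem ?_
            (hGU (Finset.mem_insert_of_mem (Finset.mem_erase_of_ne_of_mem hxu hx))))
          intro hxv
          exact hvF (hxv ▸ hx)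
    · apply Multiset.countP_congr rfl
      intro U hU
      apply propext
      constructor
      · rintro ⟨⟨hFU, hP⟩, hvU⟩
        rw [if_neg hvU] at hFU
        exact ⟨hFU, hvU⟩
      · rintro ⟨hFU, hvU⟩
        exact ⟨⟨by rw [if_neg hvU]; exact hFU, fun h => hvU h.2⟩, hvU⟩
  rw [h1, h2, h3, h4, h5]
  ring

lemma contract_parity {k : ℕ} {C : Multiset (Finset ℕ)} (hC : IsMultiComplex k C)
    {u v : ℕ} (hne : u ≠ v) {F : Finset ℕ} (hF : F.card = k) (huF : u ∈ F) (hvF : v ∉ F) :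
    (Even (simplexCount (contractS C u v) F)) ↔
      (Odd (simplexCount C F) ↔ Odd (simplexCount C (insert v (F.erase u)))) := by
  have := contract_count_of_mem_u C hne huF hvF
  rw [Nat.even_iff, Nat.odd_iff, Nat.odd_iff]
  omega

lemma contract_cycle {k : ℕ} {C : Multiset (Finset ℕ)} (hC : IsSimpCycle k C)
    {u v : ℕ} (hne : u ≠ v) : IsSimpCycle k (contractS C u v) := by
  refine ⟨contract_multicomplex hC.1 u v, ?_⟩
  intro F hF
  by_cases hvF : v ∈ F
  · rw [contract_count_of_mem_v C hne hvF]; exact Even.zero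
  by_cases huF : u ∈ F
  · rw [contract_parity hC.1 hne hF huF hvF]
    have hk : 1 ≤ k := by
      have := Finset.card_pos.2 ⟨u, huF⟩
      omega
    have hGcard : (insert v (F.erase u)).card = k := by
      rw [Finset.card_insert_of_notMem (fun h => hvF (Finset.mem_of_mem_erase h)),
        Finset.card_erase_of_mem huF, hF]
      omega
    have e1 := hC.2 F hF
    have e2 := hC.2 _ hGcard
    rw [Nat.even_iff] at e1 e2
    rw [Nat.odd_iff, Nat.odd_iff]
    omega
  · rw [contract_count_of_not_mem hC.1 hne hF huF hvF]
    exact hC.2 F hF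
end AuxCJ
namespace AuxCJ

lemma exists_superset_of_odd {S : Multiset (Finset ℕ)} {F : Finset ℕ}
    (h : Odd (simplexCount S F)) : ∃ U ∈ S, F ⊆ U := by
  have : 0 < simplexCount S F := Nat.pos_of_ne_zero (by rintro h0; rw [h0] at h; simp at h)
  exact Multiset.countP_pos.1 this

lemma subset_vertexSet_of_odd {S : Multiset (Finset ℕ)} {F : Finset ℕ}
    (h : Odd (simplexCount S F)) : F ⊆ vertexSet S := by
  obtain ⟨U, hU, hFU⟩ := exists_superset_of_odd h
  exact fun x hx => mem_vertexSet_of_mem hU (hFU hx)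

lemma count_nodup_sum {S : Multiset (Finset ℕ)} (hnd : S.Nodup) (H : Finset ℕ) :
    simplexCount S H = ∑ U ∈ S.toFinset, if H ⊆ U then 1 else 0 := by
  have hval : S.toFinset.val = S := by
    rw [Multiset.toFinset_val, Multiset.dedup_eq_self.2 hnd]
  rw [← Finset.card_filter]
  show simplexCount S H = (S.toFinset.filter _).val.card
  rw [Finset.filter_val, hval, simplexCount, Multiset.countP_eq_card_filter]

lemma count_S_eq_zero_of_not_subV {S : Multiset (Finset ℕ)} {F : Finset ℕ}
    (h : ¬ F ⊆ vertexSet S) : simplexCount S F = 0 := by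
  rw [simplexCount, Multiset.countP_eq_zero]
  intro U hU hFU
  exact h (fun x hx => mem_vertexSet_of_mem hU (hFU hx))

lemma star_count {k : ℕ} {S : Multiset (Finset ℕ)} (hnd : S.Nodup) (hcomp : IsMultiComplex k S) {u v : ℕ}
    (hne : u ≠ v) (hk : 1 ≤ k)
    (hswap : ∀ H : Finset ℕ, H.card = k → u ∈ H → v ∉ H →
      (Odd (simplexCount S H) ↔ Odd (simplexCount S (insert v (H.erase u)))))
    {F : Finset ℕ} (hF : F.card = k) (huF : u ∈ F) (hvF : v ∈ F) :
    simplexCount (faceStar k S u v) F % 2 = simplexCount S F % 2 := by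
  classical
  by_cases hFV : F ⊆ vertexSet S
  swap
  · rw [count_S_eq_zero_of_not_subV hFV]
    have : simplexCount (faceStar k S u v) F = 0 := by
      rw [simplexCount, Multiset.countP_eq_zero]
      intro K hK hFK
      have hKV : K ⊆ vertexSet S := (mem_faceDag_iff.1 ((Multiset.mem_of_le
        (faceStar_le_faceDag k S u v)) hK)).1
      exact hFV (hFK.trans hKV)
    rw [this]
  set A := F.erase u with hA
  set B := F.erase v with hB
  set T := vertexSet S \ F with hT
  have hAcard : A.card = k - 1 := by rw [hA, Finset.card_erase_of_mem huF, hF]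
  have hvA : v ∈ A := Finset.mem_erase_of_ne_of_mem hne.symm hvF
  have huB : u ∈ B := Finset.mem_erase_of_ne_of_mem hne huF
  have hvB : v ∉ B := Finset.notMem_erase _ _
  have hBcard : B.card = k - 1 := by rw [hB, Finset.card_erase_of_mem hvF, hF]
  -- Step 1
  have step1 : ∀ w ∈ T, (insert w F ∈ faceStar k S u v ↔ Odd (simplexCount S (insert w A))) := by
    intro w hw
    obtain ⟨hwV, hwF⟩ := Finset.mem_sdiff.1 hw
    have hwu : w ≠ u := fun h => hwF (h ▸ huF)
    have hwv : w ≠ v := fun h => hwF (h ▸ hvF)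
    have hwA : w ∉ A := fun h => hwF (Finset.mem_of_mem_erase h)
    have hwB : w ∉ B := fun h => hwF (Finset.mem_of_mem_erase h)
    have hKu : (insert w F).erase u = insert w A := by
      rw [hA, Finset.erase_insert_of_ne hwu]
    have hKv : (insert w F).erase v = insert w B := by
      rw [hB, Finset.erase_insert_of_ne hwv]
    have hAwcard : (insert w A).card = k := by
      rw [Finset.card_insert_of_notMem hwA, hAcard]; omega
    have hBwcard : (insert w B).card = k := by
      rw [Finset.card_insert_of_notMem hwB, hBcard]; omega
    -- the swap identity : insert v ((insert w B).erase u) = insert w A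
    have hswapBA : insert v ((insert w B).erase u) = insert w A := by
      rw [Finset.erase_insert_of_ne hwu, Finset.insert_comm]
      congr 1
      rw [hB, hA, Finset.erase_right_comm]
      exact Finset.insert_erase (Finset.mem_erase_of_ne_of_mem hne.symm hvF)
    have hiff : Odd (simplexCount S (insert w B)) ↔ Odd (simplexCount S (insert w A)) := by
      have := hswap (insert w B) hBwcard (Finset.mem_insert_of_mem huB)
        (by simp [hwv.symm, hvB])
      rwa [hswapBA] at this
    constructor
    · intro hKstar
      obtain ⟨hdag, hbu, hbv⟩ := mem_faceStar_iff.1 hKstar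
      rw [hKu] at hbu
      exact hbu.2
    · intro hoddA
      have hoddB : Odd (simplexCount S (insert w B)) := hiff.2 hoddA
      refine mem_faceStar_iff.2 ⟨mem_faceDag_iff.2 ⟨?_, ?_, ?_, ?_, ?_, ?_⟩, ?_, ?_⟩
      · exact Finset.insert_subset hwV hFV
      · rw [Finset.card_insert_of_notMem hwF, hF]
      · exact Finset.mem_insert_of_mem huF
      · exact Finset.mem_insert_of_mem hvF
      · rw [hKu]; exact exists_superset_of_odd hoddA
      · rw [hKv]; exact exists_superset_of_odd hoddB
      · rw [hKu]; exact ⟨hAwcard, hoddA⟩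
      · rw [hKv]; exact ⟨hBwcard, hoddB⟩
  -- Step 2
  have step2 : simplexCount (faceStar k S u v) F
      = (T.filter (fun w => insert w F ∈ faceStar k S u v)).card := by
    have hmapnd : (Multiset.map (fun w => insert w F)
        (T.filter (fun w => insert w F ∈ faceStar k S u v)).val).Nodup := by
      refine Multiset.Nodup.map_on ?_ (Finset.nodup _)
      intro x hx y hy hxy
      have hxF : x ∉ F := (Finset.mem_sdiff.1 (Finset.mem_of_mem_filter _ hx)).2
      have : x ∈ insert y F := hxy ▸ Finset.mem_insert_self x F
      rcases Finset.mem_insert.1 this with h | h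
      · exact h
      · exact absurd h hxF
    have hfeq : Multiset.filter (fun K => F ⊆ K) (faceStar k S u v)
        = Multiset.map (fun w => insert w F)
            (T.filter (fun w => insert w F ∈ faceStar k S u v)).val := by
      refine Multiset.Nodup.ext (Multiset.Nodup.filter _ (nodup_faceStar k S u v)) hmapnd |>.2 ?_
      intro K
      simp only [Multiset.mem_filter, Multiset.mem_map, Finset.mem_val, Finset.mem_filter]
      constructor
      · rintro ⟨hKstar, hFK⟩
        have hdag := mem_faceDag_iff.1 (Multiset.mem_of_le (faceStar_le_faceDag k S u v) hKstar)
        obtain ⟨hKV, hKcard, -⟩ := hdag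
        have hex : (K \ F).Nonempty := by
          rw [← Finset.card_pos, Finset.card_sdiff_of_subset hFK, hKcard, hF]; omega
        obtain ⟨w, hw⟩ := hex
        obtain ⟨hwK, hwF⟩ := Finset.mem_sdiff.1 hw
        have hKeq : K = insert w F := by
          refine (Finset.eq_of_subset_of_card_le (Finset.insert_subset hwK hFK) ?_).symm
          rw [hKcard, Finset.card_insert_of_notMem hwF, hF]
        refine ⟨w, ⟨Finset.mem_sdiff.2 ⟨hKV hwK, hwF⟩, ?_⟩, hKeq.symm⟩
        rwa [← hKeq]
      · rintro ⟨w, ⟨hwT, hKstar⟩, rfl⟩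
        exact ⟨hKstar, Finset.subset_insert _ _⟩
    rw [simplexCount, Multiset.countP_eq_card_filter, hfeq, Multiset.card_map]
    rfl
  -- Step 4 : double counting
  have step4 : ∑ w ∈ T, simplexCount S (insert w A)
      = ∑ U ∈ S.toFinset, (T.filter (fun w => insert w A ⊆ U)).card := by
    have : ∀ w ∈ T, simplexCount S (insert w A)
        = ∑ U ∈ S.toFinset, if insert w A ⊆ U then 1 else 0 :=
      fun w _ => count_nodup_sum hnd _
    rw [Finset.sum_congr rfl this, Finset.sum_comm]
    refine Finset.sum_congr rfl fun U _ => ?_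
    rw [Finset.card_filter]
  -- Step 5 : per-simplex computation
  have step5 : ∀ U ∈ S.toFinset, (T.filter (fun w => insert w A ⊆ U)).card % 2
      = (if F ⊆ U then 1 else 0) % 2 := by
    intro U hU
    have hUS : U ∈ S := Multiset.mem_toFinset.1 hU
    have hUV : U ⊆ vertexSet S := fun x hx => mem_vertexSet_of_mem hUS hx
    by_cases hAU : A ⊆ U
    · have hfilt : T.filter (fun w => insert w A ⊆ U) = U \ F := by
        ext w
        simp only [Finset.mem_filter, Finset.mem_sdiff, hT, Finset.insert_subset_iff]
        constructor
        · rintro ⟨⟨hwV, hwF⟩, hwU, -⟩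
          exact ⟨hwU, hwF⟩
        · rintro ⟨hwU, hwF⟩
          exact ⟨⟨hUV hwU, hwF⟩, hwU, hAU⟩
      rw [hfilt]
      have hcardUF := Finset.card_sdiff_add_card_inter U F
      by_cases huU : u ∈ U
      · have hFU : F ⊆ U := by
          have : F = insert u A := by rw [hA, Finset.insert_erase huF]
          rw [this]
          exact Finset.insert_subset huU hAU
        rw [if_pos hFU]
        have hinter : U ∩ F = F := Finset.inter_eq_right.2 hFU
        rw [hinter, hF] at hcardUF
        have : (U \ F).card = 1 := by
          have hUcard : U.card = k + 1 := hcomp U hUS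
          omega
        rw [this]
      · have hFU : ¬ F ⊆ U := fun h => huU (h huF)
        rw [if_neg hFU]
        have hinter : U ∩ F = A := by
          ext x
          simp only [Finset.mem_inter]
          constructor
          · rintro ⟨hxU, hxF⟩
            exact Finset.mem_erase_of_ne_of_mem (fun h => huU (h ▸ hxU)) hxF
          · intro hxA
            exact ⟨hAU hxA, Finset.mem_of_mem_erase hxA⟩
        rw [hinter, hAcard] at hcardUF
        have hUcard : U.card = k + 1 := hcomp U hUS
        have : (U \ F).card = 2 := by omega
        rw [this]
    · have hfilt : T.filter (fun w => insert w A ⊆ U) = ∅ := by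
        rw [Finset.filter_eq_empty_iff]
        intro w _
        rw [Finset.insert_subset_iff]
        exact fun h => hAU h.2
      have hFU : ¬ F ⊆ U := fun h => hAU ((Finset.erase_subset _ _).trans h)
      rw [hfilt, if_neg hFU, Finset.card_empty]
  -- Step 3 + assemble
  rw [step2, Finset.card_filter, Finset.sum_nat_mod]
  have e1 : ∀ w ∈ T, (if insert w F ∈ faceStar k S u v then 1 else 0) % 2
      = simplexCount S (insert w A) % 2 := by
    intro w hw
    by_cases h : insert w F ∈ faceStar k S u v
    · rw [if_pos h]
      have := Nat.odd_iff.1 ((step1 w hw).1 h)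
      omega
    · rw [if_neg h]
      have : ¬ Odd (simplexCount S (insert w A)) := fun ho => h ((step1 w hw).2 ho)
      rw [Nat.odd_iff] at this
      omega
  rw [Finset.sum_congr rfl e1, ← Finset.sum_nat_mod, step4, Finset.sum_nat_mod,
    Finset.sum_congr rfl step5, ← Finset.sum_nat_mod, ← Finset.card_filter,
    Finset.card_filter, ← count_nodup_sum hnd]

end AuxCJ
namespace AuxCJ

lemma faceDag_props {k : ℕ} {S : Multiset (Finset ℕ)} {u v : ℕ} {K : Finset ℕ}
    (h : K ∈ faceDag k S u v) : u ∈ K ∧ v ∈ K ∧ K.card = k + 1 := by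
  obtain ⟨-, h1, h2, h3, -⟩ := mem_faceDag_iff.1 h
  exact ⟨h2, h3, h1⟩

lemma symmDiff_multicomplex {k : ℕ} {S T : Multiset (Finset ℕ)}
    (hS : IsMultiComplex k S) (hT : IsMultiComplex k T) :
    IsMultiComplex k (symmDiffM S T) := by
  intro U hU
  rcases mem_symmDiff hU with h | h
  · exact hS U h
  · exact hT U h

lemma faceStar_multicomplex (k : ℕ) (S : Multiset (Finset ℕ)) (u v : ℕ) :
    IsMultiComplex k (faceStar k S u v) := fun K hK =>
  (faceDag_props (Multiset.mem_of_le (faceStar_le_faceDag k S u v) hK)).2.2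

/-- Part (a). -/
lemma partA {k : ℕ} {S : Multiset (Finset ℕ)} {u v : ℕ} (hne : u ≠ v)
    (S' : Multiset (Finset ℕ)) (hle : S' ≤ faceDag k S u v)
    (hcyc : IsSimpCycle k (symmDiffM S S')) : S' = faceStar k S u v := by
  have hnd' : S'.Nodup := Multiset.nodup_of_le hle (nodup_faceDag k S u v)
  have hall : ∀ K ∈ S', u ∈ K ∧ v ∈ K ∧ K.card = k + 1 :=
    fun K hK => faceDag_props (Multiset.mem_of_le hle hK)
  have hallu : ∀ K ∈ S', u ∈ K ∧ K.card = k + 1 := fun K hK => ⟨(hall K hK).1, (hall K hK).2.2⟩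
  have hallv : ∀ K ∈ S', v ∈ K ∧ K.card = k + 1 := fun K hK => ⟨(hall K hK).2.1, (hall K hK).2.2⟩
  refine (Multiset.Nodup.ext hnd' (nodup_faceStar k S u v)).2 fun K => ⟨fun hK => ?_, fun hK => ?_⟩
  · obtain ⟨huK, hvK, hKcard⟩ := hall K hK
    have hdag := Multiset.mem_of_le hle hK
    refine mem_faceStar_iff.2 ⟨hdag, ?_, ?_⟩
    · -- K.erase u ∈ boundarySet k S
      have hFcard : (K.erase u).card = k := by rw [Finset.card_erase_of_mem huK, hKcard]; omega
      have hpar := (simplexCount_symmDiff_parity S S' (K.erase u)).1 (hcyc.2 _ hFcard)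
      have hcount := count_unique (k := k) hnd' hallu hFcard (Finset.notMem_erase _ _)
      rw [Finset.insert_erase huK, if_pos hK] at hcount
      exact ⟨hFcard, hpar.2 (by rw [hcount]; exact odd_one)⟩
    · have hFcard : (K.erase v).card = k := by rw [Finset.card_erase_of_mem hvK, hKcard]; omega
      have hpar := (simplexCount_symmDiff_parity S S' (K.erase v)).1 (hcyc.2 _ hFcard)
      have hcount := count_unique (k := k) hnd' hallv hFcard (Finset.notMem_erase _ _)
      rw [Finset.insert_erase hvK, if_pos hK] at hcount
      exact ⟨hFcard, hpar.2 (by rw [hcount]; exact odd_one)⟩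
  · obtain ⟨hdag, hbu, hbv⟩ := mem_faceStar_iff.1 hK
    obtain ⟨huK, hvK, hKcard⟩ := faceDag_props hdag
    have hFcard : (K.erase u).card = k := by rw [Finset.card_erase_of_mem huK, hKcard]; omega
    have hpar := (simplexCount_symmDiff_parity S S' (K.erase u)).1 (hcyc.2 _ hFcard)
    have hodd' : Odd (simplexCount S' (K.erase u)) := hpar.1 hbu.2
    have hcount := count_unique (k := k) hnd' hallu hFcard (Finset.notMem_erase _ _)
    rw [Finset.insert_erase huK] at hcount
    rw [hcount] at hodd'
    by_contra hKS'
    rw [if_neg hKS'] at hodd'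
    simp at hodd'

/-- membership of `insert v F` in `faceStar` when `u ∈ F`, `v ∉ F`. -/
lemma insert_mem_faceStar_iff {k : ℕ} {S : Multiset (Finset ℕ)} {u v : ℕ} (hne : u ≠ v)
    (hu : u ∈ vertexSet S) (hv : v ∈ vertexSet S)
    {F : Finset ℕ} (hF : F.card = k) (huF : u ∈ F) (hvF : v ∉ F)
    (hswapF : Odd (simplexCount S F) ↔ Odd (simplexCount S (insert v (F.erase u)))) :
    insert v F ∈ faceStar k S u v ↔ Odd (simplexCount S F) := by
  have hk : 1 ≤ k := by
    have := Finset.card_pos.2 ⟨u, huF⟩; omega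
  have hKv : (insert v F).erase v = F := Finset.erase_insert hvF
  have hKu : (insert v F).erase u = insert v (F.erase u) := Finset.erase_insert_of_ne hne.symm
  have hGcard : (insert v (F.erase u)).card = k := by
    rw [Finset.card_insert_of_notMem (fun h => hvF (Finset.mem_of_mem_erase h)),
      Finset.card_erase_of_mem huF, hF]
    omega
  constructor
  · intro hmem
    obtain ⟨-, -, hbv⟩ := mem_faceStar_iff.1 hmem
    rw [hKv] at hbv
    exact hbv.2
  · intro hodd
    have hoddG := hswapF.1 hodd
    refine mem_faceStar_iff.2 ⟨mem_faceDag_iff.2 ⟨?_, ?_, ?_, ?_, ?_, ?_⟩, ?_, ?_⟩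
    · exact Finset.insert_subset hv (subset_vertexSet_of_odd hodd)
    · rw [Finset.card_insert_of_notMem hvF, hF]
    · exact Finset.mem_insert_of_mem huF
    · exact Finset.mem_insert_self _ _
    · rw [hKu]; exact exists_superset_of_odd hoddG
    · rw [hKv]; exact exists_superset_of_odd hodd
    · rw [hKu]; exact ⟨hGcard, hoddG⟩
    · rw [hKv]; exact ⟨hF, hodd⟩

lemma faceDag_comm (k : ℕ) (S : Multiset (Finset ℕ)) (u v : ℕ) :
    faceDag k S u v = faceDag k S v u := by
  unfold faceDag
  classical
  exact Multiset.filter_congr fun K _ => by tauto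

lemma faceStar_comm (k : ℕ) (S : Multiset (Finset ℕ)) (u v : ℕ) :
    faceStar k S u v = faceStar k S v u := by
  unfold faceStar
  rw [faceDag_comm]
  classical
  exact Multiset.filter_congr fun K _ => by tauto

/-- Part (b). -/
lemma partB {k : ℕ} (hk : 1 ≤ k) {S : Multiset (Finset ℕ)} (hnd : S.Nodup)
    (hcomp : IsMultiComplex k S) {u v : ℕ} (hne : u ≠ v)
    (hu : u ∈ vertexSet S) (hv : v ∈ vertexSet S) :
    IsSimpCycle k (contractS S u v) ↔ IsSimpCycle k (symmDiffM S (faceStar k S u v)) := by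
  have hall : ∀ K ∈ faceStar k S u v, u ∈ K ∧ v ∈ K ∧ K.card = k + 1 :=
    fun K hK => faceDag_props (Multiset.mem_of_le (faceStar_le_faceDag k S u v) hK)
  have hallu : ∀ K ∈ faceStar k S u v, u ∈ K ∧ K.card = k + 1 :=
    fun K hK => ⟨(hall K hK).1, (hall K hK).2.2⟩
  have hallv : ∀ K ∈ faceStar k S u v, v ∈ K ∧ K.card = k + 1 :=
    fun K hK => ⟨(hall K hK).2.1, (hall K hK).2.2⟩
  have hndStar := nodup_faceStar k S u v
  constructor
  · intro hcyc
    have hswap : ∀ H : Finset ℕ, H.card = k → u ∈ H → v ∉ H →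
        (Odd (simplexCount S H) ↔ Odd (simplexCount S (insert v (H.erase u)))) := by
      intro H hH huH hvH
      exact (contract_parity hcomp hne hH huH hvH).1 (hcyc.2 H hH)
    refine ⟨symmDiff_multicomplex hcomp (faceStar_multicomplex k S u v), ?_⟩
    intro F hF
    rw [simplexCount_symmDiff_parity]
    by_cases huF : u ∈ F <;> by_cases hvF : v ∈ F
    · -- both : the big counting lemma
      have := star_count hnd hcomp hne hk hswap hF huF hvF
      rw [Nat.odd_iff, Nat.odd_iff]
      omega
    · -- u ∈ F, v ∉ F
      rw [count_unique (k := k) hndStar hallv hF hvF]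
      have hmem := insert_mem_faceStar_iff hne hu hv hF huF hvF (hswap F hF huF hvF)
      by_cases h : insert v F ∈ faceStar k S u v
      · rw [if_pos h]
        exact iff_of_true (hmem.1 h) odd_one
      · rw [if_neg h]
        exact iff_of_false (fun ho => h (hmem.2 ho)) (by simp)
    · -- v ∈ F, u ∉ F
      rw [count_unique (k := k) hndStar hallu hF huF]
      have hG'card : (insert u (F.erase v)).card = k := by
        rw [Finset.card_insert_of_notMem (fun h => huF (Finset.mem_of_mem_erase h)),
          Finset.card_erase_of_mem hvF, hF]
        omega
      have hsw := hswap (insert u (F.erase v)) hG'card (Finset.mem_insert_self _ _)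
        (by simp [Ne.symm hne, Finset.notMem_erase])
      rw [show insert v ((insert u (F.erase v)).erase u) = F by
        rw [Finset.erase_insert (fun h => huF (Finset.mem_of_mem_erase h)),
          Finset.insert_erase hvF]] at hsw
      have hmem := insert_mem_faceStar_iff hne.symm hv hu hF hvF huF hsw.symm
      rw [← faceStar_comm k S u v] at hmem
      by_cases h : insert u F ∈ faceStar k S u v
      · rw [if_pos h]
        exact iff_of_true (hmem.1 h) odd_one
      · rw [if_neg h]
        exact iff_of_false (fun ho => h (hmem.2 ho)) (by simp)
    · -- neither
      rw [count_zero_of_two hne hall hF huF hvF]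
      have heven : Even (simplexCount S F) := by
        have := hcyc.2 F hF
        rwa [contract_count_of_not_mem hcomp hne hF huF hvF] at this
      simp [Nat.even_iff.1 heven, Nat.odd_iff]
  · intro hcyc
    refine ⟨contract_multicomplex hcomp u v, ?_⟩
    intro F hF
    by_cases hvF : v ∈ F
    · rw [contract_count_of_mem_v S hne hvF]; exact Even.zero
    by_cases huF : u ∈ F
    · rw [contract_parity hcomp hne hF huF hvF]
      have hk1 : 1 ≤ k := hk
      set G := insert v (F.erase u) with hG
      have hGcard : G.card = k := by
        rw [hG, Finset.card_insert_of_notMem (fun h => hvF (Finset.mem_of_mem_erase h)),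
          Finset.card_erase_of_mem huF, hF]
        omega
      have huG : u ∉ G := by simp [hG, hne, Finset.notMem_erase]
      have hvG : v ∈ G := Finset.mem_insert_self _ _
      have h1 := (simplexCount_symmDiff_parity S _ F).1 (hcyc.2 F hF)
      have h2 := (simplexCount_symmDiff_parity S _ G).1 (hcyc.2 G hGcard)
      rw [count_unique (k := k) hndStar hallv hF hvF] at h1
      rw [count_unique (k := k) hndStar hallu hGcard huG] at h2
      have hsame : insert v F = insert u G := by
        rw [hG, Finset.insert_comm, Finset.insert_erase huF]
      rw [hsame] at h1
      rw [h1, h2]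
    · rw [contract_count_of_not_mem hcomp hne hF huF hvF]
      have h1 := (simplexCount_symmDiff_parity S _ F).1 (hcyc.2 F hF)
      rw [count_zero_of_two hne hall hF huF hvF] at h1
      simp only [Nat.odd_iff] at h1
      rw [Nat.even_iff]
      omega

end AuxCJ
namespace AuxCJ

lemma contract_add (A B : Multiset (Finset ℕ)) (u v : ℕ) :
    contractS (A + B) u v = contractS A u v + contractS B u v := by
  simp [contractS, Multiset.filter_add, Multiset.map_add]

lemma contract_mono {A B : Multiset (Finset ℕ)} (h : A ≤ B) (u v : ℕ) :
    contractS A u v ≤ contractS B u v :=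
  Multiset.map_le_map (Multiset.filter_le_filter _ h)

lemma contract_eq_zero_of_all {A : Multiset (Finset ℕ)} {u v : ℕ}
    (h : ∀ U ∈ A, u ∈ U ∧ v ∈ U) : contractS A u v = 0 := by
  rw [contractS, Multiset.map_eq_zero, Multiset.filter_eq_nil]
  exact fun U hU hP => hP (h U hU)

/-- a nonempty `Nodup` `k`-cycle cannot have all simplices containing both `u` and `v`. -/
lemma no_cycle_all_uv {k : ℕ} {T' : Multiset (Finset ℕ)} (hnd : T'.Nodup)
    (hcyc : IsSimpCycle k T') (h0 : T' ≠ 0) {u v : ℕ} (hne : u ≠ v)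
    (hall : ∀ U ∈ T', u ∈ U ∧ v ∈ U) : False := by
  obtain ⟨K, hK⟩ := Multiset.exists_mem_of_ne_zero h0
  obtain ⟨huK, hvK⟩ := hall K hK
  have hKcard := hcyc.1 K hK
  have hFcard : (K.erase u).card = k := by
    rw [Finset.card_erase_of_mem huK, hKcard]; omega
  have hcount := count_unique (k := k) hnd (fun U hU => ⟨(hall U hU).1, hcyc.1 U hU⟩)
    hFcard (Finset.notMem_erase _ _)
  rw [Finset.insert_erase huK, if_pos hK] at hcount
  have := hcyc.2 _ hFcard
  rw [hcount] at this
  simp at this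

lemma nodup_symmDiff {S T : Multiset (Finset ℕ)} (hS : S.Nodup) (hT : T.Nodup) :
    (symmDiffM S T).Nodup := by
  rw [symmDiffM, Multiset.nodup_add]
  refine ⟨Multiset.nodup_of_le (Multiset.sub_le_self _ _) hS,
    Multiset.nodup_of_le (Multiset.sub_le_self _ _) hT, ?_⟩
  rw [Multiset.disjoint_left]
  intro a ha hb
  have h1 : 0 < Multiset.count a (S - T) := Multiset.count_pos.2 ha
  have h2 : 0 < Multiset.count a (T - S) := Multiset.count_pos.2 hb
  rw [Multiset.count_sub] at h1 h2
  omega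

lemma sub_cycle {k : ℕ} {T T' : Multiset (Finset ℕ)} (hT : IsSimpCycle k T)
    (hT' : IsSimpCycle k T') (hle : T' ≤ T) : IsSimpCycle k (T - T') := by
  constructor
  · intro U hU
    exact hT.1 U (Multiset.mem_of_le (Multiset.sub_le_self _ _) hU)
  · intro F hF
    have hsplit : simplexCount (T - T') F + simplexCount T' F = simplexCount T F := by
      rw [← simplexCount_add, tsub_add_cancel_of_le hle]
    have e1 := hT.2 F hF
    have e2 := hT'.2 F hF
    rw [Nat.even_iff] at e1 e2 ⊢
    omega

/-- Part (c). -/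
lemma partC {k : ℕ} (hk : 1 ≤ k) {S : Multiset (Finset ℕ)} (hnd : S.Nodup)
    (hcomp : IsMultiComplex k S) {u v : ℕ} (hne : u ≠ v)
    (hu : u ∈ vertexSet S) (hv : v ∈ vertexSet S)
    (hcirc : IsSimpCircuit k (contractS S u v)) :
    IsSimpCircuit k (symmDiffM S (faceStar k S u v)) := by
  obtain ⟨hcyc0, hne0, hmin⟩ := hcirc
  set Star := faceStar k S u v with hStar
  set T := symmDiffM S Star with hT
  have hallStar : ∀ K ∈ Star, u ∈ K ∧ v ∈ K :=
    fun K hK => by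
      have := faceDag_props (Multiset.mem_of_le (faceStar_le_faceDag k S u v) hK)
      exact ⟨this.1, this.2.1⟩
  have hTcyc : IsSimpCycle k T := (partB hk hnd hcomp hne hu hv).1 hcyc0
  have hTnd : T.Nodup := nodup_symmDiff hnd (nodup_faceStar k S u v)
  -- contraction of T is below contraction of S
  have hcontrT : ∀ T' : Multiset (Finset ℕ), T' ≤ T → contractS T' u v ≤ contractS S u v := by
    intro T' hle
    refine le_trans (contract_mono hle u v) ?_
    rw [hT, symmDiffM, contract_add]
    have h2 : contractS (Star - S) u v = 0 :=
      contract_eq_zero_of_all fun U hU =>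
        hallStar U (Multiset.mem_of_le (Multiset.sub_le_self _ _) hU)
    rw [h2, add_zero]
    exact contract_mono (Multiset.sub_le_self _ _) u v
  have hT0 : T ≠ 0 := by
    intro h0
    rw [hT, symmDiffM] at h0
    have h1 : S - Star = 0 ∧ Star - S = 0 := by
      constructor
      · exact Multiset.le_zero.1 (h0 ▸ (le_add_right le_rfl : S - Star ≤ S - Star + (Star - S)))
      · exact Multiset.le_zero.1 (h0 ▸ (le_add_left le_rfl : Star - S ≤ S - Star + (Star - S)))
    have hSeq : S = Star := le_antisymm (tsub_eq_zero_iff_le.1 h1.1)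
      (tsub_eq_zero_iff_le.1 h1.2)
    have : contractS S u v = 0 := contract_eq_zero_of_all fun U hU => hallStar U (hSeq ▸ hU)
    exact hne0 this
  refine ⟨hTcyc, hT0, ?_⟩
  intro T' hle hT'0 hT'T hT'cyc
  have hT'nd : T'.Nodup := Multiset.nodup_of_le hle hTnd
  have hc' : IsSimpCycle k (contractS T' u v) := contract_cycle hT'cyc hne
  have hcases : contractS T' u v = 0 ∨ contractS T' u v = contractS S u v := by
    by_contra hcon
    push_neg at hcon
    exact hmin _ (hcontrT T' hle) hcon.1 hcon.2 hc'
  rcases hcases with h0 | hSc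
  · -- all simplices of T' contain u and v : contradiction
    have : ∀ U ∈ T', u ∈ U ∧ v ∈ U := by
      rw [contractS, Multiset.map_eq_zero, Multiset.filter_eq_nil] at h0
      intro U hU
      by_contra hUc
      exact (h0 U hU) hUc
    exact no_cycle_all_uv hT'nd hT'cyc hT'0 hne this
  · -- the complement is also a nonempty proper subcycle mapping onto `S/uv`
    set T'' := T - T' with hT''
    have hT''cyc : IsSimpCycle k T'' := sub_cycle hTcyc hT'cyc hle
    have hT''0 : T'' ≠ 0 := by
      intro h0
      exact hT'T (le_antisymm hle (tsub_eq_zero_iff_le.1 h0))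
    have hT''nd : T''.Nodup := Multiset.nodup_of_le (Multiset.sub_le_self _ _) hTnd
    have hc'' : IsSimpCycle k (contractS T'' u v) := contract_cycle hT''cyc hne
    have hT''le : T'' ≤ T := Multiset.sub_le_self _ _
    have hcases'' : contractS T'' u v = 0 ∨ contractS T'' u v = contractS S u v := by
      by_contra hcon
      push_neg at hcon
      exact hmin _ (hcontrT T'' hT''le) hcon.1 hcon.2 hc''
    rcases hcases'' with h0 | hSc''
    · have : ∀ U ∈ T'', u ∈ U ∧ v ∈ U := by
        rw [contractS, Multiset.map_eq_zero, Multiset.filter_eq_nil] at h0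
        intro U hU
        by_contra hUc
        exact (h0 U hU) hUc
      exact no_cycle_all_uv hT''nd hT''cyc hT''0 hne this
    · -- both contract onto S/uv : cardinality contradiction
      have hadd : contractS T' u v + contractS T'' u v = contractS T u v := by
        rw [hT'', ← contract_add]
        congr 1
        rw [add_comm, tsub_add_cancel_of_le hle]
      have hle2 : contractS T u v ≤ contractS S u v := hcontrT T le_rfl
      have hcard := Multiset.card_le_card hle2
      rw [← hadd, Multiset.card_add, hSc, hSc''] at hcard
      have : Multiset.card (contractS S u v) = 0 := by omega
      exact hne0 (Multiset.card_eq_zero.1 this)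

end AuxCJ

theorem faceStar_characterisation (k : ℕ) (hk : 1 ≤ k)
    (S : Multiset (Finset ℕ)) (hScomplex : IsMultiComplex k S) (hnodup : S.Nodup)
    (u v : ℕ) (hu : u ∈ vertexSet S) (hv : v ∈ vertexSet S) (hne : u ≠ v) :
    (∀ S' : Multiset (Finset ℕ), S' ≤ faceDag k S u v →
        IsSimpCycle k (symmDiffM S S') → S' = faceStar k S u v) ∧
      (IsSimpCycle k (contractS S u v) ↔ IsSimpCycle k (symmDiffM S (faceStar k S u v))) ∧
      (IsSimpCircuit k (contractS S u v) → IsSimpCircuit k (symmDiffM S (faceStar k S u v))) := by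
  exact ⟨fun S' hle hcyc => AuxCJ.partA hne S' hle hcyc,
    AuxCJ.partB hk hnodup hScomplex hne hu hv,
    AuxCJ.partC hk hnodup hScomplex hne hu hv⟩
end
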